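/- arXiv:1303.2579 — 4 statements merged into one kernel-verified Lean document; each statement's English description precedes it below -/
import Mathlib

section
/- Let P and Q be probability mass functions on a finite set 𝒳 with Supp(P) ⊆ Supp(Q), and let ε ∈ [0,1). Then there exists a minimizer φ ∈ B^ε(P) attaining D^ε_∞(P||Q) = log max_{x : P(x)>0} φ(x)/Q(x) whose support equals the support of P, i.e., Supp(φ) = Supp(P). -/
open scoped Classical BigOperators

/-- `maxRatio P φ Q = max_{x : P(x) > 0} φ(x)/Q(x)`. -/
noncomputable def maxRatio {α : Type*} [Fintype α] (P φ Q : α → ℝ) : ℝ :=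
  sSup ((fun x => φ x / Q x) '' {x | 0 < P x})

/-- The smooth max Rényi divergence
`D^ε_∞(P‖Q) = log₂ inf_{φ ∈ B^ε(P)} max_{x : P(x) > 0} φ(x)/Q(x)`. -/
noncomputable def Dsm {α : Type*} [Fintype α] (ε : ℝ) (P Q : α → ℝ) : ℝ :=
  Real.logb 2 (sInf {r : ℝ | ∃ φ : α → ℝ,
    (∀ x, 0 ≤ φ x ∧ φ x ≤ P x) ∧ 1 - ε ≤ ∑ x, φ x ∧ r = maxRatio P φ Q})

/-- the infimum defining the smooth max Rényi divergence is attained by a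
minimizer `φ ∈ B^ε(P)` whose support equals the support of `P`. -/
theorem smooth_max_divergence_attained_full_support
    {α : Type*} [Fintype α]
    (P Q : α → ℝ)
    (hP0 : ∀ x, 0 ≤ P x) (hP1 : ∑ x, P x = 1)
    (hQ0 : ∀ x, 0 ≤ Q x) (hQ1 : ∑ x, Q x = 1)
    (hsupp : ∀ x, 0 < P x → 0 < Q x)
    (ε : ℝ) (hε0 : 0 ≤ ε) (hε1 : ε < 1) :
    ∃ φ : α → ℝ, (∀ x, 0 ≤ φ x ∧ φ x ≤ P x) ∧ 1 - ε ≤ ∑ x, φ x ∧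
      Dsm ε P Q = Real.logb 2 (maxRatio P φ Q) ∧
      (∀ x, 0 < φ x ↔ 0 < P x) := by
  classical
  -- The feasible set K
  set K : Set (α → ℝ) := {φ | (∀ x, 0 ≤ φ x ∧ φ x ≤ P x) ∧ 1 - ε ≤ ∑ x, φ x} with hK
  have hPK : P ∈ K := ⟨fun x => ⟨hP0 x, le_refl _⟩, by rw [hP1]; linarith⟩
  -- The support finset T
  set T : Finset α := Finset.univ.filter (fun x => 0 < P x) with hT
  have hTne : T.Nonempty := by
    by_contra h
    rw [Finset.not_nonempty_iff_eq_empty] at h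
    have hz : ∀ x, P x = 0 := by
      intro x
      by_contra hx
      have hxp : 0 < P x := lt_of_le_of_ne (hP0 x) (Ne.symm hx)
      have : x ∈ T := by simp [hT, hxp]
      simp [h] at this
    simp [hz] at hP1
  have hset : {x : α | 0 < P x} = ↑T := by ext x; simp [hT]
  -- maxRatio as a Finset.sup'
  have hmr : ∀ φ : α → ℝ, maxRatio P φ Q = T.sup' hTne (fun x => φ x / Q x) := by
    intro φ
    rw [maxRatio, hset, Finset.sup'_eq_csSup_image]
  -- K is compact
  have hKsub : K ⊆ Set.pi Set.univ (fun x => Set.Icc 0 (P x)) := by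
    intro φ hφ x _
    exact ⟨(hφ.1 x).1, (hφ.1 x).2⟩
  have hKclosed : IsClosed K := by
    have h1 : IsClosed {φ : α → ℝ | ∀ x, 0 ≤ φ x ∧ φ x ≤ P x} := by
      have : {φ : α → ℝ | ∀ x, 0 ≤ φ x ∧ φ x ≤ P x}
          = ⋂ x, ((fun φ : α → ℝ => φ x) ⁻¹' Set.Icc 0 (P x)) := by
        ext φ; simp [Set.mem_Icc]
      rw [this]
      exact isClosed_iInter fun x => isClosed_Icc.preimage (continuous_apply x)
    have h2 : IsClosed {φ : α → ℝ | 1 - ε ≤ ∑ x, φ x} :=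
      isClosed_le continuous_const (continuous_finset_sum _ fun x _ => continuous_apply x)
    exact h1.inter h2
  have hKcompact : IsCompact K :=
    (isCompact_univ_pi fun x => isCompact_Icc).of_isClosed_subset hKclosed hKsub
  -- continuity of the objective
  have hf : Continuous (fun φ : α → ℝ => maxRatio P φ Q) := by
    have : Continuous (fun φ : α → ℝ => T.sup' hTne (fun x => φ x / Q x)) := by
      apply Continuous.finset_sup'_apply hTne
      intro x hx
      have hQx : 0 < Q x := hsupp x (by simpa [hT] using hx)
      exact (continuous_apply x).div_const _
    simpa only [hmr] using this
  -- minimizer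
  obtain ⟨φ₀, hφ₀K, hmin⟩ := hKcompact.exists_isMinOn ⟨P, hPK⟩ hf.continuousOn
  set M : ℝ := maxRatio P φ₀ Q with hM
  -- M > 0
  have hexy : ∃ y, 0 < φ₀ y := by
    by_contra h
    push_neg at h
    have hz : ∀ x, φ₀ x = 0 := fun x => le_antisymm (h x) (hφ₀K.1 x).1
    have := hφ₀K.2
    simp [hz] at this
    linarith
  obtain ⟨y, hy⟩ := hexy
  have hPy : 0 < P y := lt_of_lt_of_le hy (hφ₀K.1 y).2
  have hQy : 0 < Q y := hsupp y hPy
  have hyT : y ∈ T := by simp [hT, hPy]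
  have hMpos : 0 < M := by
    have : φ₀ y / Q y ≤ M := by
      rw [hM, hmr]
      exact Finset.le_sup' (fun x => φ₀ x / Q x) hyT
    exact lt_of_lt_of_le (div_pos hy hQy) this
  -- ratio bound for φ₀
  have hratio : ∀ x, 0 < P x → φ₀ x ≤ M * Q x := by
    intro x hx
    have hQx : 0 < Q x := hsupp x hx
    have : φ₀ x / Q x ≤ M := by
      rw [hM, hmr]
      exact Finset.le_sup' (fun x => φ₀ x / Q x) (Finset.mem_filter.mpr ⟨Finset.mem_univ x, hx⟩)
    calc φ₀ x = (φ₀ x / Q x) * Q x := by field_simp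
    _ ≤ M * Q x := by
        apply mul_le_mul_of_nonneg_right this hQx.le
  -- the full-support minimizer
  set φ' : α → ℝ := fun x => max (φ₀ x) (min (P x) (M * Q x)) with hφ'
  have hφ'0 : ∀ x, 0 ≤ φ' x := fun x => le_trans (hφ₀K.1 x).1 (le_max_left _ _)
  have hφ'P : ∀ x, φ' x ≤ P x := fun x => max_le (hφ₀K.1 x).2 (min_le_left _ _)
  have hφ'ge : ∀ x, φ₀ x ≤ φ' x := fun x => le_max_left _ _
  have hφ'sum : 1 - ε ≤ ∑ x, φ' x :=
    le_trans hφ₀K.2 (Finset.sum_le_sum fun x _ => hφ'ge x)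
  have hφ'K : φ' ∈ K := ⟨fun x => ⟨hφ'0 x, hφ'P x⟩, hφ'sum⟩
  have hφ'supp : ∀ x, 0 < φ' x ↔ 0 < P x := by
    intro x
    constructor
    · intro h; exact lt_of_lt_of_le h (hφ'P x)
    · intro h
      have hQx : 0 < Q x := hsupp x h
      have : 0 < min (P x) (M * Q x) := lt_min h (mul_pos hMpos hQx)
      exact lt_of_lt_of_le this (le_max_right _ _)
  -- maxRatio P φ' Q = M
  have hmr' : maxRatio P φ' Q = M := by
    apply le_antisymm
    · rw [hmr]
      apply Finset.sup'_le
      intro x hx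
      have hPx : 0 < P x := by simpa [hT] using hx
      have hQx : 0 < Q x := hsupp x hPx
      rw [div_le_iff₀ hQx]
      exact max_le (hratio x hPx) (min_le_right _ _)
    · rw [hM, hmr, hmr]
      apply Finset.sup'_le
      intro x hx
      have hPx : 0 < P x := by simpa [hT] using hx
      have hQx : 0 < Q x := hsupp x hPx
      have hdd : φ₀ x / Q x ≤ φ' x / Q x := by gcongr; exact hφ'ge x
      exact le_trans hdd (Finset.le_sup' (fun x => φ' x / Q x) hx)
  -- the defining set
  set S : Set ℝ := {r : ℝ | ∃ φ : α → ℝ,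
    (∀ x, 0 ≤ φ x ∧ φ x ≤ P x) ∧ 1 - ε ≤ ∑ x, φ x ∧ r = maxRatio P φ Q} with hS
  have hMS : M ∈ S := ⟨φ', ⟨fun x => ⟨hφ'0 x, hφ'P x⟩, hφ'sum, hmr'.symm⟩⟩
  have hMlb : ∀ r ∈ S, M ≤ r := by
    rintro r ⟨φ, h1, h2, rfl⟩
    exact hmin (by exact ⟨h1, h2⟩ : φ ∈ K)
  have hsInf : sInf S = M := le_antisymm (csInf_le ⟨M, hMlb⟩ hMS) (le_csInf ⟨M, hMS⟩ hMlb)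
  exact ⟨φ', fun x => ⟨hφ'0 x, hφ'P x⟩, hφ'sum, by rw [Dsm, ← hS, hsInf, hmr'], hφ'supp⟩
end

section
/- Let P and Q be probability mass functions on a finite set 𝒳 with Supp(P) ⊆ Supp(Q), and for each n let P^{×n} and Q^{×n} denote the n-fold product (i.i.d.) distributions on 𝒳^n. Then lim_{ε→0} limsup_{n→∞} (1/n) D^ε_∞(P^{×n}||Q^{×n}) = D(P||Q), the Kullback–Leibler divergence D(P||Q) = Σ_{x : P(x)>0} P(x) log(P(x)/Q(x)). -/
open scoped Classical BigOperators

def Rset {α : Type*} [Fintype α] (ε : ℝ) (P Q : α → ℝ) : Set ℝ :=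
  {r : ℝ | ∃ φ : α → ℝ,
    (∀ x, 0 ≤ φ x ∧ φ x ≤ P x) ∧ 1 - ε ≤ ∑ x, φ x ∧ r = maxRatio P φ Q}

lemma Dsm_eq_Rset {α : Type*} [Fintype α] (ε : ℝ) (P Q : α → ℝ) :
    Dsm ε P Q = Real.logb 2 (sInf (Rset ε P Q)) := rfl


section Moments
variable {α : Type*} [Fintype α]

lemma sum_pi_succ (n : ℕ) (F : (Fin (n+1) → α) → ℝ) :
    ∑ x : Fin (n+1) → α, F x = ∑ a : α, ∑ y : Fin n → α, F (Fin.cons a y) := by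
  rw [← ((Fin.consEquiv (fun _ : Fin (n+1) => α)).sum_comp F), Fintype.sum_prod_type]
  rfl

lemma sum_prod_pow (n : ℕ) (g : α → ℝ) :
    ∑ x : Fin n → α, ∏ i, g (x i) = (∑ a, g a) ^ n := by
  induction n with
  | zero => simp
  | succ n ih =>
    rw [sum_pi_succ n (fun x => ∏ i, g (x i))]
    simp only [Fin.prod_univ_succ, Fin.cons_zero, Fin.cons_succ]
    rw [← Finset.sum_mul_sum]
    rw [ih]; ring

variable (P f : α → ℝ)

lemma sum_prod_one (hP1 : ∑ a, P a = 1) (n : ℕ) :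
    ∑ x : Fin n → α, ∏ i, P (x i) = 1 := by
  rw [sum_prod_pow, hP1, one_pow]

lemma sum_prod_mean (hP1 : ∑ a, P a = 1) (n : ℕ) :
    ∑ x : Fin n → α, (∏ i, P (x i)) * (∑ i, f (x i))
      = n * (∑ a, P a * f a) := by
  induction n with
  | zero => simp
  | succ n ih =>
    rw [sum_pi_succ n (fun x => (∏ i, P (x i)) * (∑ i, f (x i)))]
    simp only [Fin.prod_univ_succ, Fin.sum_univ_succ, Fin.cons_zero, Fin.cons_succ]
    have : ∀ a : α, ∑ y : Fin n → α,
        (P a * ∏ i, P (y i)) * (f a + ∑ i, f (y i))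
        = P a * f a * (∑ y : Fin n → α, ∏ i, P (y i))
          + P a * (∑ y : Fin n → α, (∏ i, P (y i)) * (∑ i, f (y i))) := by
      intro a
      rw [Finset.mul_sum, Finset.mul_sum, ← Finset.sum_add_distrib]
      exact Finset.sum_congr rfl (fun y _ => by ring)
    simp_rw [this, sum_prod_one P hP1 n, ih]
    rw [Finset.sum_add_distrib, ← Finset.sum_mul, ← Finset.sum_mul, hP1]
    push_cast; ring

lemma sum_prod_sq (hP1 : ∑ a, P a = 1) (n : ℕ) :
    ∑ x : Fin n → α, (∏ i, P (x i)) * (∑ i, f (x i))^2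
      = n * (∑ a, P a * (f a)^2) + (n * (n - 1)) * (∑ a, P a * f a)^2 := by
  induction n with
  | zero => simp
  | succ n ih =>
    rw [sum_pi_succ n (fun x => (∏ i, P (x i)) * (∑ i, f (x i))^2)]
    simp only [Fin.prod_univ_succ, Fin.sum_univ_succ, Fin.cons_zero, Fin.cons_succ]
    have : ∀ a : α, ∑ y : Fin n → α,
        (P a * ∏ i, P (y i)) * (f a + ∑ i, f (y i))^2
        = P a * (f a)^2 * (∑ y : Fin n → α, ∏ i, P (y i))
          + 2 * (P a * f a) * (∑ y : Fin n → α, (∏ i, P (y i)) * (∑ i, f (y i)))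
          + P a * (∑ y : Fin n → α, (∏ i, P (y i)) * (∑ i, f (y i))^2) := by
      intro a
      rw [Finset.mul_sum, Finset.mul_sum, Finset.mul_sum, ← Finset.sum_add_distrib,
        ← Finset.sum_add_distrib]
      exact Finset.sum_congr rfl (fun y _ => by ring)
    simp_rw [this, sum_prod_one P hP1 n, sum_prod_mean P f hP1 n, ih]
    rw [Finset.sum_add_distrib, Finset.sum_add_distrib, ← Finset.sum_mul,
      ← Finset.sum_mul, ← Finset.sum_mul, hP1]
    have h2 : ∑ i : α, 2 * (P i * f i) = 2 * ∑ a, P a * f a := by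
      rw [Finset.mul_sum]
    rw [h2]
    push_cast; ring

lemma sum_prod_var (hP1 : ∑ a, P a = 1) (n : ℕ) :
    ∑ x : Fin n → α, (∏ i, P (x i)) * (∑ i, f (x i) - n * (∑ a, P a * f a))^2
      = n * (∑ a, P a * (f a)^2) - n * (∑ a, P a * f a)^2 := by
  have h : ∀ x : Fin n → α,
      (∏ i, P (x i)) * (∑ i, f (x i) - n * (∑ a, P a * f a))^2
      = (∏ i, P (x i)) * (∑ i, f (x i))^2
        - 2 * (n * (∑ a, P a * f a)) * ((∏ i, P (x i)) * (∑ i, f (x i)))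
        + (n * (∑ a, P a * f a))^2 * (∏ i, P (x i)) := by
    intro x; ring
  simp_rw [h]
  rw [Finset.sum_add_distrib, Finset.sum_sub_distrib, ← Finset.mul_sum, ← Finset.mul_sum,
    sum_prod_one P hP1 n, sum_prod_mean P f hP1 n, sum_prod_sq P f hP1 n]
  rcases Nat.eq_zero_or_pos n with h0 | h0
  · subst h0; push_cast; ring
  · have : (1:ℝ) ≤ n := by exact_mod_cast h0
    push_cast; ring

lemma cheb (hP0 : ∀ a, 0 ≤ P a) (hP1 : ∑ a, P a = 1) (n : ℕ) {t : ℝ} (ht : 0 < t) :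
    ∑ x ∈ Finset.univ.filter
        (fun x : Fin n → α => t ≤ |∑ i, f (x i) - n * (∑ a, P a * f a)|),
      ∏ i, P (x i) ≤ n * (∑ a, P a * (f a)^2) / t^2 := by
  set μ := ∑ a, P a * f a
  have hpn : ∀ x : Fin n → α, 0 ≤ ∏ i, P (x i) :=
    fun x => Finset.prod_nonneg (fun i _ => hP0 _)
  have key : t^2 * ∑ x ∈ Finset.univ.filter
        (fun x : Fin n → α => t ≤ |∑ i, f (x i) - n * μ|), ∏ i, P (x i)
      ≤ n * (∑ a, P a * (f a)^2) - n * μ^2 := by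
    rw [← sum_prod_var P f hP1 n, Finset.mul_sum]
    refine le_trans (Finset.sum_le_sum ?_) (Finset.sum_le_sum_of_subset_of_nonneg
      (Finset.filter_subset _ _) (fun x _ _ => mul_nonneg (hpn x) (sq_nonneg _)))
    intro x hx
    rw [Finset.mem_filter] at hx
    have h1 : t^2 ≤ (∑ i, f (x i) - n * μ)^2 := by
      calc t^2 = |t|^2 := by rw [abs_of_pos ht]
      _ ≤ |∑ i, f (x i) - n * μ|^2 := by
          have : |t| ≤ |∑ i, f (x i) - n * μ| := by rw [abs_of_pos ht]; exact hx.2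
          exact pow_le_pow_left₀ (abs_nonneg _) this 2
      _ = (∑ i, f (x i) - n * μ)^2 := sq_abs _
    calc t^2 * ∏ i, P (x i) ≤ (∑ i, f (x i) - n * μ)^2 * ∏ i, P (x i) :=
        mul_le_mul_of_nonneg_right h1 (hpn x)
      _ = (∏ i, P (x i)) * (∑ i, f (x i) - n * μ)^2 := by ring
  rw [le_div_iff₀ (by positivity), mul_comm]
  refine key.trans ?_
  have : 0 ≤ (n:ℝ) * μ^2 := by positivity
  linarith

end Moments

lemma two_rpow_sum {ι : Type*} (s : Finset ι) (g : ι → ℝ) :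
    (2:ℝ) ^ (∑ i ∈ s, g i) = ∏ i ∈ s, (2:ℝ) ^ g i := by
  classical
  induction s using Finset.induction with
  | empty => simp
  | insert a s h ih =>
    rw [Finset.sum_insert h, Finset.prod_insert h, Real.rpow_add (by norm_num), ih]

section Support
variable {α : Type*} [Fintype α] (P Q : α → ℝ)

lemma prod_pos_iff (hP0 : ∀ a, 0 ≤ P a) {n : ℕ} (x : Fin n → α) :
    0 < ∏ i, P (x i) ↔ ∀ i, 0 < P (x i) := by
  constructor
  · intro h i
    rcases (hP0 (x i)).lt_or_eq with h' | h'
    · exact h'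
    · exfalso
      rw [Finset.prod_eq_zero (Finset.mem_univ i) h'.symm] at h
      exact lt_irrefl _ h
  · intro h; exact Finset.prod_pos (fun i _ => h i)

lemma prod_ratio (hsupp : ∀ a, 0 < P a → 0 < Q a) {n : ℕ} (x : Fin n → α)
    (hx : ∀ i, 0 < P (x i)) :
    ∏ i, P (x i) = (∏ i, Q (x i)) * (2:ℝ) ^ (∑ i, Real.logb 2 (P (x i) / Q (x i))) := by
  rw [two_rpow_sum, ← Finset.prod_mul_distrib]
  refine Finset.prod_congr rfl (fun i _ => ?_)
  have hq := hsupp _ (hx i)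
  rw [Real.rpow_logb (by norm_num) (by norm_num) (div_pos (hx i) hq)]
  field_simp

end Support


section Generic
variable {α : Type*} [Fintype α] {P Q : α → ℝ} {ε lam : ℝ}

lemma maxRatio_nonneg (hQ0 : ∀ a, 0 ≤ Q a) {φ : α → ℝ} (hφ0 : ∀ x, 0 ≤ φ x)
    {x0 : α} (hx0 : 0 < P x0) : 0 ≤ maxRatio P φ Q := by
  have hmem : φ x0 / Q x0 ∈ (fun x => φ x / Q x) '' {x | 0 < P x} :=
    ⟨x0, hx0, rfl⟩
  exact le_trans (div_nonneg (hφ0 x0) (hQ0 x0))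
    (le_csSup (Set.toFinite _).bddAbove hmem)

lemma Rset_nonneg (hQ0 : ∀ a, 0 ≤ Q a) {x0 : α} (hx0 : 0 < P x0)
    {r : ℝ} (hr : r ∈ Rset ε P Q) : 0 ≤ r := by
  obtain ⟨φ, hφ, _, rfl⟩ := hr
  exact maxRatio_nonneg hQ0 (fun x => (hφ x).1) hx0

lemma min_mem_Rset (hP0 : ∀ a, 0 ≤ P a) (hP1 : ∑ a, P a = 1)
    (hQ0 : ∀ a, 0 ≤ Q a) (hsupp : ∀ a, 0 < P a → 0 < Q a)
    (hlam : 0 < lam) {x0 : α} (hx0 : 0 < P x0)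
    (hT : ∑ x, max (P x - lam * Q x) 0 ≤ ε) :
    maxRatio P (fun x => min (P x) (lam * Q x)) Q ∈ Rset ε P Q ∧
      maxRatio P (fun x => min (P x) (lam * Q x)) Q ≤ lam := by
  set φ : α → ℝ := fun x => min (P x) (lam * Q x) with hφdef
  have hφ : ∀ x, 0 ≤ φ x ∧ φ x ≤ P x := fun x =>
    ⟨le_min (hP0 x) (mul_nonneg hlam.le (hQ0 x)), min_le_left _ _⟩
  have hsum : 1 - ε ≤ ∑ x, φ x := by
    have : ∀ x, φ x = P x - max (P x - lam * Q x) 0 := by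
      intro x
      simp only [hφdef]
      rcases le_total (P x) (lam * Q x) with h | h
      · rw [min_eq_left h, max_eq_right (by linarith)]; ring
      · rw [min_eq_right h, max_eq_left (by linarith)]; ring
    simp_rw [this]
    rw [Finset.sum_sub_distrib, hP1]
    linarith
  have hle : maxRatio P φ Q ≤ lam := by
    refine csSup_le ⟨φ x0 / Q x0, ⟨x0, hx0, rfl⟩⟩ ?_
    rintro y ⟨x, hx, rfl⟩
    have hq : 0 < Q x := hsupp x hx
    rw [div_le_iff₀ hq]
    exact min_le_right _ _
  exact ⟨⟨φ, hφ, hsum, rfl⟩, hle⟩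

lemma Rset_lower (hP0 : ∀ a, 0 ≤ P a) (hP1 : ∑ a, P a = 1)
    (hQ0 : ∀ a, 0 ≤ Q a) (hsupp : ∀ a, 0 < P a → 0 < Q a)
    {x0 : α} (hx0 : 0 < P x0)
    {lam' : ℝ} (hT : ε < ∑ x, max (P x - lam' * Q x) 0)
    {r : ℝ} (hr : r ∈ Rset ε P Q) : lam' ≤ r := by
  obtain ⟨φ, hφ, hsum, rfl⟩ := hr
  set M := maxRatio P φ Q with hM
  have hM0 : 0 ≤ M := maxRatio_nonneg hQ0 (fun x => (hφ x).1) hx0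
  by_contra hcon
  push_neg at hcon
  -- T(M) ≤ ε
  have hφle : ∀ x, 0 < P x → φ x ≤ M * Q x := by
    intro x hx
    have hq : 0 < Q x := hsupp x hx
    have : φ x / Q x ≤ M :=
      le_csSup (Set.toFinite _).bddAbove ⟨x, hx, rfl⟩
    rwa [div_le_iff₀ hq] at this
  have hTM : ∑ x, max (P x - M * Q x) 0 ≤ ε := by
    have key : ∀ x, P x - max (P x - M * Q x) 0 ≥ φ x := by
      intro x
      rcases (hP0 x).lt_or_eq with hx | hx
      · have h1 := hφle x hx
        rcases le_total (P x) (M * Q x) with h | h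
        · rw [max_eq_right (by linarith)]; linarith [(hφ x).2]
        · rw [max_eq_left (by linarith)]; linarith
      · have hφ0 : φ x = 0 := le_antisymm (hx ▸ (hφ x).2) (hφ x).1
        have : max (P x - M * Q x) 0 = 0 :=
          max_eq_right (by nlinarith [hQ0 x, hM0, hx.symm ▸ le_refl (0:ℝ)])
        rw [this, hφ0]; simp [← hx]
    have := Finset.sum_le_sum (fun x (_ : x ∈ Finset.univ) => key x)
    rw [Finset.sum_sub_distrib, hP1] at this
    linarith
  -- monotonicity contradiction
  have hmono : ∑ x, max (P x - lam' * Q x) 0 ≤ ∑ x, max (P x - M * Q x) 0 := by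
    refine Finset.sum_le_sum (fun x _ => max_le_max ?_ le_rfl)
    have : M * Q x ≤ lam' * Q x := mul_le_mul_of_nonneg_right hcon.le (hQ0 x)
    linarith
  linarith

end Generic


set_option maxHeartbeats 2000000 in
lemma key_tendsto {α : Type*} [Fintype α]
    (P Q : α → ℝ)
    (hP0 : ∀ x, 0 ≤ P x) (hP1 : ∑ x, P x = 1)
    (hQ0 : ∀ x, 0 ≤ Q x)
    (hsupp : ∀ x, 0 < P x → 0 < Q x)
    {ε : ℝ} (hε : ε ∈ Set.Ioo (0:ℝ) (1/4)) :
    Filter.Tendsto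
      (fun n : ℕ =>
        Dsm ε (fun x : Fin (n + 1) → α => ∏ i, P (x i))
          (fun x : Fin (n + 1) → α => ∏ i, Q (x i)) / (n + 1))
      Filter.atTop
      (nhds (∑ a, P a * Real.logb 2 (P a / Q a))) := by
  obtain ⟨hε0, hε4⟩ := hε
  set f : α → ℝ := fun a => Real.logb 2 (P a / Q a) with hf
  set mu : ℝ := ∑ a, P a * f a with hmu
  set m2 : ℝ := ∑ a, P a * (f a)^2 with hm2
  have hm2nn : 0 ≤ m2 := Finset.sum_nonneg fun a _ =>
    mul_nonneg (hP0 a) (sq_nonneg _)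
  -- a point in the support of P
  obtain ⟨a0, ha0⟩ : ∃ a, 0 < P a := by
    by_contra h
    push_neg at h
    have : ∑ x, P x = 0 :=
      Finset.sum_eq_zero fun a _ => le_antisymm (h a) (hP0 a)
    rw [hP1] at this; norm_num at this
  rw [Metric.tendsto_atTop]
  intro e he
  set δ : ℝ := e / 2 with hδ
  have hδ0 : 0 < δ := by positivity
  -- choose N
  obtain ⟨N, hN⟩ := exists_nat_ge
    (max (m2 / (ε * δ^2)) (max (2/δ) (2*m2 / ((δ/2)^2))))
  refine ⟨N, fun n hn => ?_⟩
  set c : ℝ := (n : ℝ) + 1 with hc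
  have hc0 : (0:ℝ) < c := by positivity
  have hcN : (N : ℝ) ≤ c := by
    have : (N:ℝ) ≤ (n:ℝ) := by exact_mod_cast hn
    linarith
  have hca : m2 / (ε * δ^2) ≤ c := le_trans (le_trans (le_max_left _ _) hN) hcN
  have hcb : 2/δ ≤ c := by
    have := le_trans (le_trans (le_max_left _ _) (le_max_right _ _)) hN
    linarith
  have hcc : 2*m2 / ((δ/2)^2) ≤ c := by
    have := le_trans (le_trans (le_max_right _ _) (le_max_right _ _)) hN
    linarith
  -- basic facts about the product distributions
  have hPn0' : ∀ x : Fin (n+1) → α, 0 ≤ ∏ i, P (x i) :=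
    fun x => Finset.prod_nonneg fun i _ => hP0 _
  have hQn0' : ∀ x : Fin (n+1) → α, 0 ≤ ∏ i, Q (x i) :=
    fun x => Finset.prod_nonneg fun i _ => hQ0 _
  have hPn1 : ∑ x : Fin (n+1) → α, ∏ i, P (x i) = 1 := sum_prod_one P hP1 (n+1)
  have hsuppn : ∀ x : Fin (n+1) → α, 0 < ∏ i, P (x i) → 0 < ∏ i, Q (x i) := by
    intro x hx
    exact Finset.prod_pos fun i _ => hsupp _ (((prod_pos_iff P hP0 x).1 hx) i)
  have hx0 : 0 < (fun x : Fin (n+1) → α => ∏ i, P (x i)) (fun _ => a0) :=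
    Finset.prod_pos fun i _ => ha0
  -- the two thresholds
  set lamU : ℝ := (2:ℝ) ^ (c * (mu + δ)) with hlamU
  set lamL : ℝ := (2:ℝ) ^ (c * (mu - δ)) with hlamL
  have hlamU0 : 0 < lamU := Real.rpow_pos_of_pos two_pos _
  have hlamL0 : 0 < lamL := Real.rpow_pos_of_pos two_pos _
  have hδ2 : (0:ℝ) < δ/2 := by linarith
  clear_value f mu m2 δ c lamU lamL
  -- Chebyshev inequalities
  have chebU : ∑ x ∈ Finset.univ.filter
      (fun x : Fin (n+1) → α => c*δ ≤ |∑ i, f (x i) - c * mu|), ∏ i, P (x i)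
      ≤ c * m2 / (c*δ)^2 := by
    rw [hmu, hm2, hc]
    have hc' : (0:ℝ) < (n:ℝ)+1 := by positivity
    exact_mod_cast cheb P f hP0 hP1 (n+1) (t := ((n:ℝ)+1)*δ) (mul_pos hc' hδ0)
  have chebL : ∑ x ∈ Finset.univ.filter
      (fun x : Fin (n+1) → α => c*(δ/2) ≤ |∑ i, f (x i) - c * mu|), ∏ i, P (x i)
      ≤ c * m2 / (c*(δ/2))^2 := by
    rw [hmu, hm2, hc]
    have hc' : (0:ℝ) < (n:ℝ)+1 := by positivity
    exact_mod_cast cheb P f hP0 hP1 (n+1) (t := ((n:ℝ)+1)*(δ/2)) (mul_pos hc' hδ2)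
  -- upper bound on T(lamU)
  have TU : ∑ x : Fin (n+1) → α,
      max ((∏ i, P (x i)) - lamU * ∏ i, Q (x i)) 0 ≤ ε := by
    have hpt : ∀ x : Fin (n+1) → α,
        max ((∏ i, P (x i)) - lamU * ∏ i, Q (x i)) 0 ≤
          if c * δ ≤ |∑ i, f (x i) - c * mu| then ∏ i, P (x i) else 0 := by
      intro x
      by_cases hb : c * δ ≤ |∑ i, f (x i) - c * mu|
      · rw [if_pos hb]
        exact max_le (by nlinarith [mul_nonneg hlamU0.le (hQn0' x)]) (hPn0' x)
      · rw [if_neg hb]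
        refine max_le ?_ le_rfl
        by_contra hcon
        push_neg at hcon
        rw [sub_pos] at hcon
        have hPpos : 0 < ∏ i, P (x i) := by nlinarith [mul_nonneg hlamU0.le (hQn0' x)]
        have hrat := prod_ratio P Q hsupp x ((prod_pos_iff P hP0 x).1 hPpos)
        have hQpos : 0 < ∏ i, Q (x i) := hsuppn x hPpos
        have h3 : lamU < (2:ℝ)^(∑ i, Real.logb 2 (P (x i) / Q (x i))) := by
          rw [hrat] at hcon
          nlinarith [hQpos, Real.rpow_pos_of_pos two_pos
            (∑ i, Real.logb 2 (P (x i) / Q (x i)))]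
        have hfS : (∑ i, Real.logb 2 (P (x i) / Q (x i))) = ∑ i, f (x i) := by
          simp [hf]
        rw [hfS, hlamU, Real.rpow_lt_rpow_left_iff one_lt_two] at h3
        apply hb
        have : c * δ ≤ ∑ i, f (x i) - c * mu := by nlinarith
        exact this.trans (le_abs_self _)
    calc ∑ x : Fin (n+1) → α, max ((∏ i, P (x i)) - lamU * ∏ i, Q (x i)) 0
        ≤ ∑ x : Fin (n+1) → α,
            if c * δ ≤ |∑ i, f (x i) - c * mu| then ∏ i, P (x i) else 0 :=
          Finset.sum_le_sum fun x _ => hpt x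
      _ = ∑ x ∈ Finset.univ.filter
            (fun x : Fin (n+1) → α => c*δ ≤ |∑ i, f (x i) - c * mu|),
            ∏ i, P (x i) := (Finset.sum_filter _ _).symm
      _ ≤ c * m2 / (c*δ)^2 := chebU
      _ ≤ ε := by
          rw [div_le_iff₀ (pow_pos (mul_pos hc0 hδ0) 2)]
          rw [div_le_iff₀ (mul_pos hε0 (pow_pos hδ0 2))] at hca
          nlinarith
  -- lower bound on T(lamL)
  have hhalf : c * m2 / (c*(δ/2))^2 ≤ 1/2 := by
    rw [div_le_iff₀ (pow_pos (mul_pos hc0 hδ2) 2)]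
    rw [div_le_iff₀ (pow_pos hδ2 2)] at hcc
    nlinarith
  have hgood : 1/2 ≤ ∑ x ∈ Finset.univ.filter
      (fun x : Fin (n+1) → α =>
        ¬ (c*(δ/2) ≤ |∑ i, f (x i) - c * mu|) ∧ 0 < ∏ i, P (x i)),
      ∏ i, P (x i) := by
    have hsplit := Finset.sum_filter_add_sum_filter_not Finset.univ
      (fun x : Fin (n+1) → α =>
        ¬ (c*(δ/2) ≤ |∑ i, f (x i) - c * mu|) ∧ 0 < ∏ i, P (x i))
      (fun x => ∏ i, P (x i))
    rw [hPn1] at hsplit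
    have hng : ∑ x ∈ Finset.univ.filter
        (fun x : Fin (n+1) → α =>
          ¬(¬ (c*(δ/2) ≤ |∑ i, f (x i) - c * mu|) ∧ 0 < ∏ i, P (x i))),
        ∏ i, P (x i) ≤ 1/2 := by
      refine le_trans (le_trans ?_ chebL) hhalf
      rw [Finset.sum_filter, Finset.sum_filter]
      refine Finset.sum_le_sum fun x _ => ?_
      by_cases hA : c*(δ/2) ≤ |∑ i, f (x i) - c * mu|
      · rw [if_pos hA]
        by_cases hG : ¬ (¬ (c*(δ/2) ≤ |∑ i, f (x i) - c * mu|) ∧ 0 < ∏ i, P (x i))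
        · rw [if_pos hG]
        · rw [if_neg hG]; exact hPn0' x
      · rw [if_neg hA]
        by_cases hp : 0 < ∏ i, P (x i)
        · rw [if_neg (not_not_intro ⟨hA, hp⟩)]
        · rw [if_pos (fun h => hp h.2)]
          exact le_of_not_gt hp
    linarith
  have TL : ε < ∑ x : Fin (n+1) → α,
      max ((∏ i, P (x i)) - lamL * ∏ i, Q (x i)) 0 := by
    have hpt : ∀ x : Fin (n+1) → α,
        (if (¬ (c*(δ/2) ≤ |∑ i, f (x i) - c * mu|) ∧ 0 < ∏ i, P (x i))
          then (∏ i, P (x i))/2 else 0)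
          ≤ max ((∏ i, P (x i)) - lamL * ∏ i, Q (x i)) 0 := by
      intro x
      split_ifs with hg
      · obtain ⟨hA, hPpos⟩ := hg
        push_neg at hA
        have hQpos : 0 < ∏ i, Q (x i) := hsuppn x hPpos
        have hrat := prod_ratio P Q hsupp x ((prod_pos_iff P hP0 x).1 hPpos)
        have hfS : (∑ i, Real.logb 2 (P (x i) / Q (x i))) = ∑ i, f (x i) := by
          simp [hf]
        rw [hfS] at hrat
        have h2c : 2 ≤ c * δ := by
          rw [div_le_iff₀ hδ0] at hcb; linarith
        have hSlb : c*(mu - δ) + 1 ≤ ∑ i, f (x i) := by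
          have h2 := (abs_lt.1 hA).1
          have hh : c * (δ/2) = (c*δ)/2 := by ring
          have hh2 : c * (mu - δ) = c * mu - c * δ := by ring
          rw [hh] at h2
          rw [hh2]
          linarith
        have h2S : 2 * lamL ≤ (2:ℝ) ^ (∑ i, f (x i)) := by
          rw [hlamL]
          calc 2 * (2:ℝ)^(c*(mu-δ)) = (2:ℝ)^(c*(mu-δ)+1) := by
                rw [Real.rpow_add two_pos, Real.rpow_one]; ring
            _ ≤ _ := (Real.rpow_le_rpow_left_iff one_lt_two).2 hSlb
        have hkey : 2 * (lamL * ∏ i, Q (x i)) ≤ ∏ i, P (x i) := by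
          rw [hrat]; nlinarith [mul_le_mul_of_nonneg_left h2S (hQn0' x)]
        refine le_max_of_le_left ?_
        nlinarith [mul_nonneg hlamL0.le (hQn0' x)]
      · exact le_max_right _ _
    have hstep : 1/4 ≤ ∑ x : Fin (n+1) → α,
        (if (¬ (c*(δ/2) ≤ |∑ i, f (x i) - c * mu|) ∧ 0 < ∏ i, P (x i))
          then (∏ i, P (x i))/2 else 0) := by
      rw [← Finset.sum_filter, ← Finset.sum_div]
      linarith
    calc ε < 1/4 := hε4
      _ ≤ _ := hstep
      _ ≤ _ := Finset.sum_le_sum fun x _ => hpt x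
  -- conclude via the Rset lemmas
  obtain ⟨hmem, hleU⟩ := min_mem_Rset (ε := ε) hPn0' hPn1 hQn0' hsuppn hlamU0 hx0 TU
  have hlower : ∀ r ∈ Rset ε (fun x : Fin (n+1) → α => ∏ i, P (x i))
      (fun x : Fin (n+1) → α => ∏ i, Q (x i)), lamL ≤ r :=
    fun r hr => Rset_lower hPn0' hPn1 hQn0' hsuppn hx0 TL hr
  have hbdd : BddBelow (Rset ε (fun x : Fin (n+1) → α => ∏ i, P (x i))
      (fun x : Fin (n+1) → α => ∏ i, Q (x i))) := ⟨lamL, fun r hr => hlower r hr⟩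
  have hne : (Rset ε (fun x : Fin (n+1) → α => ∏ i, P (x i))
      (fun x : Fin (n+1) → α => ∏ i, Q (x i))).Nonempty := ⟨_, hmem⟩
  have hinf_le : sInf (Rset ε (fun x : Fin (n+1) → α => ∏ i, P (x i))
      (fun x : Fin (n+1) → α => ∏ i, Q (x i))) ≤ lamU :=
    (csInf_le hbdd hmem).trans hleU
  have hle_inf : lamL ≤ sInf (Rset ε (fun x : Fin (n+1) → α => ∏ i, P (x i))
      (fun x : Fin (n+1) → α => ∏ i, Q (x i))) := le_csInf hne hlower
  have hDsm := Dsm_eq_Rset ε (fun x : Fin (n+1) → α => ∏ i, P (x i))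
      (fun x : Fin (n+1) → α => ∏ i, Q (x i))
  have hub : Dsm ε (fun x : Fin (n+1) → α => ∏ i, P (x i))
      (fun x : Fin (n+1) → α => ∏ i, Q (x i)) ≤ c * (mu + δ) := by
    rw [hDsm]
    calc Real.logb 2 _ ≤ Real.logb 2 lamU :=
          Real.logb_le_logb_of_le one_lt_two (lt_of_lt_of_le hlamL0 hle_inf) hinf_le
      _ = c * (mu + δ) := by
          rw [hlamU]; exact Real.logb_rpow (by norm_num) (by norm_num)
  have hlb : c * (mu - δ) ≤ Dsm ε (fun x : Fin (n+1) → α => ∏ i, P (x i))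
      (fun x : Fin (n+1) → α => ∏ i, Q (x i)) := by
    rw [hDsm]
    calc c*(mu-δ) = Real.logb 2 lamL := by
          rw [hlamL]; exact (Real.logb_rpow (by norm_num) (by norm_num)).symm
      _ ≤ _ := Real.logb_le_logb_of_le one_lt_two hlamL0 hle_inf
  rw [Real.dist_eq]
  have habs : |Dsm ε (fun x : Fin (n+1) → α => ∏ i, P (x i))
      (fun x : Fin (n+1) → α => ∏ i, Q (x i)) / c - mu| ≤ δ := by
    rw [abs_le]
    constructor
    · rw [le_sub_iff_add_le, le_div_iff₀ hc0]
      nlinarith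
    · rw [sub_le_iff_le_add, div_le_iff₀ hc0]
      nlinarith
  calc |_ - mu| ≤ δ := habs
    _ < e := by rw [hδ]; linarith



/-- for i.i.d. product distributions,
`lim_{ε→0⁺} limsup_n (1/n) D^ε_∞(P^{×n}‖Q^{×n}) = D(P‖Q)`, the Kullback–Leibler
divergence `D(P‖Q) = ∑_{x : P(x)>0} P(x) log₂ (P(x)/Q(x))`. -/
theorem smooth_max_divergence_rate_iid_eq_KL
    {α : Type*} [Fintype α]
    (P Q : α → ℝ)
    (hP0 : ∀ x, 0 ≤ P x) (hP1 : ∑ x, P x = 1)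
    (hQ0 : ∀ x, 0 ≤ Q x) (hQ1 : ∑ x, Q x = 1)
    (hsupp : ∀ x, 0 < P x → 0 < Q x) :
    Filter.Tendsto
      (fun ε : ℝ =>
        Filter.limsup
          (fun n =>
            Dsm ε (fun x : Fin (n + 1) → α => ∏ i, P (x i))
              (fun x : Fin (n + 1) → α => ∏ i, Q (x i)) / (n + 1))
          Filter.atTop)
      (nhdsWithin 0 (Set.Ioi 0))
      (nhds (∑ x ∈ Finset.univ.filter (fun x => 0 < P x),
        P x * Real.logb 2 (P x / Q x))) := by
  
  have hD : (∑ x ∈ Finset.univ.filter (fun x => 0 < P x),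
      P x * Real.logb 2 (P x / Q x)) = ∑ a, P a * Real.logb 2 (P a / Q a) := by
    refine Finset.sum_filter_of_ne ?_
    intro x _ hx
    rcases (hP0 x).lt_or_eq with h | h
    · exact h
    · exact absurd (by rw [← h]; ring) hx
  rw [hD]
  have hmem : Set.Ioo (0:ℝ) (1/4) ∈ nhdsWithin (0:ℝ) (Set.Ioi 0) :=
    Ioo_mem_nhdsGT_of_mem (by constructor <;> norm_num)
  refine Filter.Tendsto.congr' ?_ tendsto_const_nhds
  exact Filter.eventuallyEq_of_mem hmem fun ε hε =>
    ((key_tendsto P Q hP0 hP1 hQ0 hsupp hε).limsup_eq).symm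
end

section
/- Let P_{UY} be a joint pmf on a finite set 𝒰×𝒴 with marginals P_U and P_Y, let φ be a nonnegative function on 𝒰×𝒴 with φ(u,y) ≤ P_{UY}(u,y) for all (u,y), and let D ≥ 0 satisfy φ(u,y)/(P_U(u)P_Y(y)) ≤ 2^D for all (u,y) with P_{UY}(u,y) > 0. Then for any subset ℱ ⊆ 𝒰×𝒴 and any positive integer M, Σ_{y∈𝒴} P_Y(y)·(1 − Σ_{u : (u,y) ∈ ℱ} P_U(u))^M ≤ 1 − Σ_{(u,y) ∈ ℱ} φ(u,y) + exp(−M·2^{−D}). In words: if M codewords U(1),…,U(M) are drawn i.i.d. from P_U, then the probability that Y has no index m with (U(m),Y) ∈ ℱ is at most 1 − φ(ℱ) + exp(−M·2^{−D}). -/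
open scoped Classical BigOperators

lemma covering_key (M : ℕ) (c S b : ℝ) (hc : 0 < c) (hS0 : 0 ≤ S) (hS1 : S ≤ 1)
    (hb0 : 0 ≤ b) (hb1 : b ≤ 1) (hbS : b * c ≤ S) :
    (1 - S) ^ M ≤ 1 - b + Real.exp (-(M * c)) := by
  have hE0 : 0 < Real.exp (-(M * c)) := Real.exp_pos _
  have h1 : (1 - S) ^ M ≤ Real.exp ((M : ℝ) * (-S)) := by
    calc (1 - S) ^ M ≤ (Real.exp (-S)) ^ M := by
          apply pow_le_pow_left₀ (by linarith)
          have := Real.add_one_le_exp (-S); linarith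
      _ = Real.exp ((M : ℝ) * (-S)) := (Real.exp_nat_mul _ M).symm
  rcases le_or_gt c S with h | h
  · have h2 : Real.exp ((M:ℝ) * (-S)) ≤ Real.exp (-(M * c)) := by
      apply Real.exp_le_exp.2; nlinarith [Nat.cast_nonneg (α := ℝ) M]
    linarith
  · set t := S / c with ht
    have ht0 : 0 ≤ t := div_nonneg hS0 hc.le
    have ht1 : t ≤ 1 := by rw [div_le_one hc]; linarith
    have hbt : b ≤ t := (le_div_iff₀ hc).2 hbS
    have hconv := convexOn_exp.2 (Set.mem_univ (0:ℝ)) (Set.mem_univ (-(M * c)))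
      (by linarith : (0:ℝ) ≤ 1 - t) ht0 (by ring)
    simp only [smul_eq_mul, mul_zero, Real.exp_zero, mul_one, zero_add] at hconv
    have heq : t * -((M:ℝ) * c) = (M:ℝ) * (-S) := by
      rw [ht, div_mul_eq_mul_div, div_eq_iff hc.ne']; ring
    rw [heq] at hconv
    nlinarith [hconv, h1, hE0.le]

/-- covering bound.  If `φ ≤ P_{UY}` pointwise and
`φ(u,y) ≤ 2^D · P_U(u)P_Y(y)` whenever `P_{UY}(u,y) > 0`, then for any set
`ℱ ⊆ 𝒰 × 𝒴` and any positive integer `M`, the probability that `M` i.i.d. codewords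
drawn from `P_U` all miss `ℱ` for `Y ~ P_Y` satisfies
`∑_y P_Y(y) (1 − ∑_{u : (u,y) ∈ ℱ} P_U(u))^M ≤ 1 − φ(ℱ) + exp(−M·2^{−D})`. -/
theorem covering_lemma_bound
    {U Y : Type*} [Fintype U] [Fintype Y]
    (PUY : U × Y → ℝ)
    (hP0 : ∀ p, 0 ≤ PUY p) (hP1 : ∑ p, PUY p = 1)
    (PU : U → ℝ) (hPU : ∀ u, PU u = ∑ y, PUY (u, y))
    (PY : Y → ℝ) (hPY : ∀ y, PY y = ∑ u, PUY (u, y))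
    (φ : U × Y → ℝ)
    (hφ0 : ∀ p, 0 ≤ φ p) (hφle : ∀ p, φ p ≤ PUY p)
    (D : ℝ) (hD : 0 ≤ D)
    (hφD : ∀ p : U × Y, 0 < PUY p → φ p ≤ 2 ^ D * (PU p.1 * PY p.2))
    (F : Finset (U × Y)) (M : ℕ) (hM : 0 < M) :
    ∑ y, PY y * (1 - ∑ u ∈ Finset.univ.filter (fun u => (u, y) ∈ F), PU u) ^ M
      ≤ 1 - ∑ p ∈ F, φ p + Real.exp (-(M * 2 ^ (-D))) := by
  set c : ℝ := (2:ℝ) ^ (-D) with hcdef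
  have hc : 0 < c := Real.rpow_pos_of_pos two_pos _
  have h2Dc : (2:ℝ) ^ D * c = 1 := by
    rw [hcdef, ← Real.rpow_add two_pos]; simp
  have hPU0 : ∀ u, 0 ≤ PU u := fun u => by
    rw [hPU]; exact Finset.sum_nonneg fun y _ => hP0 _
  have hPY0 : ∀ y, 0 ≤ PY y := fun y => by
    rw [hPY]; exact Finset.sum_nonneg fun u _ => hP0 _
  have hSumPU : ∑ u, PU u = 1 := by
    simp_rw [hPU]; rw [← Fintype.sum_prod_type] at *; exact hP1
  have hSumPY : ∑ y, PY y = 1 := by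
    simp_rw [hPY]; rw [Finset.sum_comm, ← Fintype.sum_prod_type]; exact hP1
  set S : Y → ℝ := fun y => ∑ u ∈ Finset.univ.filter (fun u => (u, y) ∈ F), PU u with hSdef
  set a : Y → ℝ := fun y => ∑ u ∈ Finset.univ.filter (fun u => (u, y) ∈ F), φ (u, y)
    with hadef
  have hS0 : ∀ y, 0 ≤ S y := fun y => Finset.sum_nonneg fun u _ => hPU0 u
  have hS1 : ∀ y, S y ≤ 1 := fun y => by
    rw [← hSumPU]
    exact Finset.sum_le_sum_of_subset_of_nonneg (Finset.filter_subset _ _)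
      (fun u _ _ => hPU0 u)
  have ha0 : ∀ y, 0 ≤ a y := fun y => Finset.sum_nonneg fun u _ => hφ0 _
  have haPY : ∀ y, a y ≤ PY y := fun y => by
    rw [hPY]
    calc a y ≤ ∑ u ∈ Finset.univ.filter (fun u => (u, y) ∈ F), PUY (u, y) :=
          Finset.sum_le_sum fun u _ => hφle _
      _ ≤ ∑ u, PUY (u, y) :=
          Finset.sum_le_sum_of_subset_of_nonneg (Finset.filter_subset _ _)
            (fun u _ _ => hP0 _)
  have haD : ∀ y, a y * c ≤ PY y * S y := fun y => by
    have : a y ≤ 2 ^ D * (PY y * S y) := by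
      rw [hadef]
      simp only
      rw [hSdef]
      simp only
      rw [Finset.mul_sum, Finset.mul_sum]
      apply Finset.sum_le_sum
      intro u _
      rcases lt_or_eq_of_le (hP0 (u, y)) with h | h
      · calc φ (u, y) ≤ 2 ^ D * (PU u * PY y) := hφD (u, y) h
          _ = 2 ^ D * (PY y * PU u) := by ring
      · have : φ (u, y) ≤ 0 := by rw [h] at *; exact le_of_le_of_eq (hφle (u,y)) h.symm
        have h2 : (0:ℝ) ≤ 2 ^ D * (PY y * PU u) :=
          mul_nonneg (Real.rpow_nonneg (by norm_num) _) (mul_nonneg (hPY0 y) (hPU0 u))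
        linarith
    calc a y * c ≤ 2 ^ D * (PY y * S y) * c := by
          apply mul_le_mul_of_nonneg_right this hc.le
      _ = (2 ^ D * c) * (PY y * S y) := by ring
      _ = PY y * S y := by rw [h2Dc, one_mul]
  have key : ∀ y, PY y * (1 - S y) ^ M ≤ PY y - a y + PY y * Real.exp (-(M * c)) := by
    intro y
    rcases lt_or_eq_of_le (hPY0 y) with h | h
    · have hb1 : a y / PY y ≤ 1 := by rw [div_le_one h]; exact haPY y
      have hbS : (a y / PY y) * c ≤ S y := by
        rw [div_mul_eq_mul_div, div_le_iff₀ h]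
        calc a y * c ≤ PY y * S y := haD y
          _ = S y * PY y := by ring
      have hk := covering_key M c (S y) (a y / PY y) hc (hS0 y) (hS1 y)
        (div_nonneg (ha0 y) h.le) hb1 hbS
      have := mul_le_mul_of_nonneg_left hk h.le
      calc PY y * (1 - S y) ^ M ≤ PY y * (1 - a y / PY y + Real.exp (-(M * c))) := this
        _ = PY y - a y + PY y * Real.exp (-(M * c)) := by field_simp
    · have ha : a y = 0 := le_antisymm (h ▸ haPY y) (ha0 y)
      rw [← h, ha]; simp
  calc ∑ y, PY y * (1 - S y) ^ M
      ≤ ∑ y, (PY y - a y + PY y * Real.exp (-(M * c))) :=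
        Finset.sum_le_sum fun y _ => key y
    _ = (∑ y, PY y) - (∑ y, a y) + (∑ y, PY y) * Real.exp (-(M * c)) := by
        rw [Finset.sum_add_distrib, Finset.sum_sub_distrib, ← Finset.sum_mul]
    _ = 1 - (∑ p ∈ F, φ p) + Real.exp (-(M * c)) := by
        rw [hSumPY, one_mul]
        congr 2
        rw [hadef]
        simp only
        calc ∑ y, ∑ u ∈ Finset.univ.filter (fun u => (u, y) ∈ F), φ (u, y)
            = ∑ y, ∑ u, if (u, y) ∈ F then φ (u, y) else 0 := by
              simp_rw [Finset.sum_filter]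
          _ = ∑ u, ∑ y, if (u, y) ∈ F then φ (u, y) else 0 := Finset.sum_comm
          _ = ∑ p : U × Y, if p ∈ F then φ p else 0 := by
              rw [Fintype.sum_prod_type]
          _ = ∑ p ∈ F, φ p := by
              rw [Finset.sum_ite_mem, Finset.univ_inter]
end

section
/- Let (X,Y) ~ P_{XY} on a finite set 𝒳×𝒴, and let P_{U|Y} be a conditional pmf from 𝒴 to a finite set 𝒰 inducing the Markov chain X → Y → U with joint distribution P_{XYU}(x,y,u) = P_{XY}(x,y)P_{U|Y}(u|y). Then any rate pair (R₁,R₂) with R₁ > H(X|U) and R₂ > I(Y;U) is asymptotically achievable for source coding of X with coded side information Y at the decoder: for every ε > 0 and all sufficiently large n (with (X^n,Y^n) i.i.d. ~ P_{XY}), there exist maps e₁ : 𝒳^n → {1,…,⌈2^{nR₁}⌉}, e₂ : 𝒴^n → {1,…,⌈2^{nR₂}⌉}, and d : {1,…,⌈2^{nR₁}⌉} × {1,…,⌈2^{nR₂}⌉} → 𝒳^n such that Pr{d(e₁(X^n), e₂(Y^n)) ≠ X^n} ≤ ε. -/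
open scoped Classical BigOperators

set_option maxHeartbeats 1000000

section ProdMeas
variable {ι α : Type*} [Fintype ι] [DecidableEq ι] [Fintype α]

lemma sum_prod_eq_prod_sum (f : ι → α → ℝ) :
    ∑ c : ι → α, ∏ k, f k (c k) = ∏ k, ∑ a, f k a :=
  (Fintype.prod_sum (fun i (a : α) => f i a)).symm

lemma sum_pmeas_mul_prod (w : α → ℝ) (hw1 : ∑ a, w a = 1) (s : Finset ι) (h : ι → α → ℝ) :
    ∑ c : ι → α, (∏ k, w (c k)) * ∏ k ∈ s, h k (c k) = ∏ k ∈ s, ∑ a, w a * h k a := by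
  have key : ∀ c : ι → α, (∏ k, w (c k)) * ∏ k ∈ s, h k (c k)
      = ∏ k, (w (c k) * if k ∈ s then h k (c k) else 1) := by
    intro c
    rw [Finset.prod_mul_distrib]
    congr 1
    rw [Finset.prod_ite_mem Finset.univ s (fun k => h k (c k)), Finset.univ_inter]
  simp_rw [key]
  rw [sum_prod_eq_prod_sum (fun k a => w a * if k ∈ s then h k a else 1)]
  have : ∀ k : ι, (∑ a, w a * if k ∈ s then h k a else 1)
      = if k ∈ s then ∑ a, w a * h k a else 1 := by
    intro k; split_ifs with hk <;> simp [hw1]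
  simp_rw [this]
  rw [Finset.prod_ite_mem Finset.univ s, Finset.univ_inter]

lemma sum_pmeas_one (w : α → ℝ) (hw1 : ∑ a, w a = 1) :
    ∑ c : ι → α, ∏ k, w (c k) = 1 := by
  have := sum_pmeas_mul_prod (ι := ι) w hw1 ∅ (fun _ _ => 1)
  simpa using this

lemma sum_pmeas_single (w : α → ℝ) (hw1 : ∑ a, w a = 1) (j : ι) (f : α → ℝ) :
    ∑ c : ι → α, (∏ k, w (c k)) * f (c j) = ∑ a, w a * f a := by
  have := sum_pmeas_mul_prod (ι := ι) w hw1 {j} (fun _ a => f a)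
  simpa using this

lemma sum_pmeas_pair (w : α → ℝ) (hw1 : ∑ a, w a = 1) {i j : ι} (hij : i ≠ j)
    (f g : α → ℝ) :
    ∑ c : ι → α, (∏ k, w (c k)) * (f (c i) * g (c j))
      = (∑ a, w a * f a) * (∑ a, w a * g a) := by
  have := sum_pmeas_mul_prod (ι := ι) w hw1 {i, j}
    (fun k a => if k = i then f a else g a)
  simp only [Finset.prod_pair hij] at this
  simpa [hij, (by simpa using hij.symm : ¬ j = i)] using this

end ProdMeas

section Cheb
variable {α : Type*} [Fintype α]

lemma pmeas_sq_sum (w : α → ℝ) (hw1 : ∑ a, w a = 1) (f : α → ℝ) (μ : ℝ)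
    (hμ : ∑ a, w a * f a = μ) (n : ℕ) :
    ∑ c : Fin n → α, (∏ k, w (c k)) * (∑ i, (f (c i) - μ))^2
      = n * ∑ a, w a * (f a - μ)^2 := by
  have hz : ∑ a, w a * (f a - μ) = 0 := by
    simp_rw [mul_sub]
    rw [Finset.sum_sub_distrib, hμ, ← Finset.sum_mul, hw1]; ring
  have key : ∀ i j : Fin n, ∑ c : Fin n → α,
      (∏ k, w (c k)) * ((f (c i) - μ) * (f (c j) - μ))
      = if i = j then ∑ a, w a * (f a - μ)^2 else 0 := by
    intro i j
    by_cases hij : i = j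
    · subst hij
      rw [if_pos rfl, ← sum_pmeas_single (ι := Fin n) w hw1 i (fun a => (f a - μ)^2)]
      exact Finset.sum_congr rfl (fun c _ => by ring)
    · rw [if_neg hij, sum_pmeas_pair w hw1 hij (fun a => f a - μ) (fun a => f a - μ), hz]
      ring
  have expand : ∀ c : Fin n → α, (∑ i, (f (c i) - μ))^2
      = ∑ i : Fin n, ∑ j : Fin n, (f (c i) - μ) * (f (c j) - μ) := by
    intro c; rw [sq, Finset.sum_mul_sum]
  simp_rw [expand, Finset.mul_sum]
  rw [Finset.sum_comm]
  have inner : ∀ i : Fin n, (∑ c : Fin n → α, ∑ j : Fin n,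
      (∏ k, w (c k)) * ((f (c i) - μ) * (f (c j) - μ)))
      = ∑ j : Fin n, (if i = j then ∑ a, w a * (f a - μ)^2 else 0) := by
    intro i
    rw [Finset.sum_comm]
    exact Finset.sum_congr rfl (fun j _ => key i j)
  refine Eq.trans (Finset.sum_congr rfl fun i _ => inner i) ?_
  simp [Finset.sum_ite_eq, Finset.card_univ, Finset.mul_sum]

lemma pmeas_chebyshev (w : α → ℝ) (hw0 : ∀ a, 0 ≤ w a) (hw1 : ∑ a, w a = 1)
    (f : α → ℝ) (μ : ℝ) (hμ : ∑ a, w a * f a = μ)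
    (δ : ℝ) (hδ : 0 < δ) (n : ℕ) (hn : 0 < n)
    (P : (Fin n → α) → Prop) [DecidablePred P]
    (hP : ∀ c, P c → (n : ℝ) * δ ≤ ∑ i, (f (c i) - μ)) :
    ∑ c : Fin n → α, (if P c then ∏ k, w (c k) else 0)
      ≤ (∑ a, w a * (f a - μ)^2) / (n * δ^2) := by
  have hn' : (0:ℝ) < n := by exact_mod_cast hn
  have hnd : (0:ℝ) < (n:ℝ) * δ := by positivity
  have pw : ∀ c : Fin n → α,
      (if P c then ∏ k, w (c k) else 0) * ((n:ℝ)*δ)^2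
        ≤ (∏ k, w (c k)) * (∑ i, (f (c i) - μ))^2 := by
    intro c
    have hW : 0 ≤ ∏ k, w (c k) := Finset.prod_nonneg (fun k _ => hw0 (c k))
    by_cases h : P c
    · rw [if_pos h]
      have h2 : ((n:ℝ)*δ)^2 ≤ (∑ i, (f (c i) - μ))^2 :=
        pow_le_pow_left₀ hnd.le (hP c h) 2
      exact mul_le_mul_of_nonneg_left h2 hW
    · rw [if_neg h, zero_mul]; exact mul_nonneg hW (sq_nonneg _)
  have hsum : (∑ c : Fin n → α, (if P c then ∏ k, w (c k) else 0)) * ((n:ℝ)*δ)^2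
      ≤ n * ∑ a, w a * (f a - μ)^2 := by
    rw [Finset.sum_mul]
    calc ∑ c : Fin n → α, (if P c then ∏ k, w (c k) else 0) * ((n:ℝ)*δ)^2
        ≤ ∑ c : Fin n → α, (∏ k, w (c k)) * (∑ i, (f (c i) - μ))^2 :=
          Finset.sum_le_sum (fun c _ => pw c)
      _ = n * ∑ a, w a * (f a - μ)^2 := pmeas_sq_sum w hw1 f μ hμ n
  rw [le_div_iff₀ (by positivity : (0:ℝ) < (n:ℝ) * δ^2)]
  calc (∑ c : Fin n → α, (if P c then ∏ k, w (c k) else 0)) * ((n:ℝ) * δ^2)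
      = ((∑ c : Fin n → α, (if P c then ∏ k, w (c k) else 0)) * ((n:ℝ)*δ)^2) / n := by
        field_simp
    _ ≤ (n * ∑ a, w a * (f a - μ)^2) / n := by
        gcongr
    _ = ∑ a, w a * (f a - μ)^2 := by field_simp
end Cheb

section Helpers
variable {β : Type*} [Fintype β]

lemma expect_abs_le_sqrt (W g : β → ℝ) (hW0 : ∀ b, 0 ≤ W b) (hW1 : ∑ b, W b = 1) :
    ∑ b, W b * |g b| ≤ Real.sqrt (∑ b, W b * (g b)^2) := by
  have : ∀ b, W b * |g b| = Real.sqrt (W b) * (Real.sqrt (W b) * |g b|) := by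
    intro b
    rw [← mul_assoc, Real.mul_self_sqrt (hW0 b)]
  simp_rw [this]
  have h := Real.sum_mul_le_sqrt_mul_sqrt Finset.univ
    (fun b => Real.sqrt (W b)) (fun b => Real.sqrt (W b) * |g b|)
  have e1 : ∑ b, Real.sqrt (W b) ^ 2 = 1 := by
    simp_rw [Real.sq_sqrt (hW0 _)]; exact hW1
  have e2 : ∀ b, (Real.sqrt (W b) * |g b|) ^ 2 = W b * (g b)^2 := by
    intro b; rw [mul_pow, Real.sq_sqrt (hW0 b), sq_abs]
  simp_rw [e2, e1] at h
  simpa using h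

lemma exists_le_of_expect_le (W v : β → ℝ) (hW0 : ∀ b, 0 ≤ W b) (hW1 : ∑ b, W b = 1)
    {ε : ℝ} (h : ∑ b, W b * v b ≤ ε) : ∃ b, v b ≤ ε := by
  by_contra hc
  push_neg at hc
  have hb : ∃ b, 0 < W b := by
    by_contra hb
    push_neg at hb
    have : ∑ b, W b = 0 :=
      Finset.sum_eq_zero (fun b _ => le_antisymm (hb b) (hW0 b))
    rw [this] at hW1; norm_num at hW1
  obtain ⟨b₀, hb₀⟩ := hb
  have : ∑ b, W b * ε < ∑ b, W b * v b := by
    apply Finset.sum_lt_sum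
    · exact fun b _ => mul_le_mul_of_nonneg_left (hc b).le (hW0 b)
    · exact ⟨b₀, Finset.mem_univ _, by
        exact mul_lt_mul_of_pos_left (hc b₀) hb₀⟩
  rw [← Finset.sum_mul, hW1, one_mul] at this
  exact absurd h (not_le.mpr this)

end Helpers

section Kern
variable {α β : Type*} [Fintype α] [Fintype β]

/-- conditional kernel `P_{A|B}` with uniform fallback off the support of `PB`. -/
noncomputable def kern (PB : β → ℝ) (PAB : α × β → ℝ) (a : α) (b : β) : ℝ :=
  if 0 < PB b then PAB (a, b) / PB b else (Fintype.card α : ℝ)⁻¹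

lemma kern_nonneg (PB : β → ℝ) (PAB : α × β → ℝ) (h0 : ∀ p, 0 ≤ PAB p) (a : α) (b : β) :
    0 ≤ kern PB PAB a b := by
  unfold kern; split_ifs with h
  · exact div_nonneg (h0 _) h.le
  · positivity

lemma kern_sum_one [Nonempty α] (PB : β → ℝ) (PAB : α × β → ℝ)
    (hmarg : ∀ b, ∑ a, PAB (a, b) = PB b) (b : β) :
    ∑ a, kern PB PAB a b = 1 := by
  unfold kern
  split_ifs with h
  · rw [← Finset.sum_div, hmarg, div_self h.ne']
  · rw [Finset.sum_const, Finset.card_univ, nsmul_eq_mul,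
      mul_inv_cancel₀ (by exact_mod_cast Fintype.card_ne_zero)]

lemma kern_mul (PB : β → ℝ) (PAB : α × β → ℝ)
    (h0 : ∀ p, 0 ≤ PAB p) (hle : ∀ a b, PAB (a, b) ≤ PB b) (a : α) (b : β) :
    PB b * kern PB PAB a b = PAB (a, b) := by
  unfold kern
  split_ifs with h
  · field_simp
  · push_neg at h
    have hb : PB b = 0 := le_antisymm h ((h0 (a, b)).trans (hle a b))
    have : PAB (a, b) = 0 := le_antisymm (hb ▸ hle a b) (h0 _)
    rw [hb, this, zero_mul]

lemma kern_pos (PB : β → ℝ) (PAB : α × β → ℝ)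
    (h0 : ∀ p, 0 ≤ PAB p) (hle : ∀ a b, PAB (a, b) ≤ PB b) {a : α} {b : β}
    (hp : 0 < PAB (a, b)) : kern PB PAB a b = PAB (a, b) / PB b ∧ 0 < kern PB PAB a b := by
  have hPB : 0 < PB b := lt_of_lt_of_le hp (hle a b)
  unfold kern
  rw [if_pos hPB]
  exact ⟨rfl, div_pos hp hPB⟩

end Kern

section Zip
variable {A B : Type*} [Fintype A] [Fintype B]

lemma sum_zip (n : ℕ) (G : (Fin n → A × B) → ℝ) :
    ∑ c : Fin n → A × B, G c
      = ∑ a : Fin n → A, ∑ b : Fin n → B, G (fun i => (a i, b i)) := by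
  have h := Fintype.sum_equiv (Equiv.arrowProdEquivProdArrow (Fin n) (fun _ => A) (fun _ => B)) G
    (fun p => G (fun i => (p.1 i, p.2 i)))
    (fun c => by simp [Equiv.arrowProdEquivProdArrow])
  rw [h, Fintype.sum_prod_type]

lemma aep_bound (w f : A → ℝ) (hw0 : ∀ a, 0 ≤ w a) (hw1 : ∑ a, w a = 1)
    (μ : ℝ) (hμ : ∑ a, w a * f a = μ) (δ : ℝ) (hδ : 0 < δ) (n : ℕ) (hn : 0 < n)
    (E : (Fin n → A) → Prop) [DecidablePred E]
    (hE : ∀ c, E c → (∀ i, 0 < w (c i)) → (n : ℝ) * (μ + δ) < ∑ i, f (c i)) :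
    ∑ c : Fin n → A, (if E c then ∏ k, w (c k) else 0)
      ≤ (∑ a, w a * (f a - μ)^2) / (n * δ^2) := by
  have hpt : ∀ c : Fin n → A, (if E c then ∏ k, w (c k) else 0)
      ≤ (if (E c ∧ ∀ i, 0 < w (c i)) then ∏ k, w (c k) else 0) := by
    intro c
    by_cases hEc : E c
    · by_cases hsupp : ∀ i, 0 < w (c i)
      · simp [hEc, hsupp]
      · push_neg at hsupp
        obtain ⟨i, hi⟩ := hsupp
        have : ∏ k, w (c k) = 0 :=
          Finset.prod_eq_zero (Finset.mem_univ i) (le_antisymm hi (hw0 _))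
        simp [hEc, this]
    · simp [hEc]
  calc ∑ c : Fin n → A, (if E c then ∏ k, w (c k) else 0)
      ≤ ∑ c : Fin n → A, (if (E c ∧ ∀ i, 0 < w (c i)) then ∏ k, w (c k) else 0) :=
        Finset.sum_le_sum (fun c _ => hpt c)
    _ ≤ (∑ a, w a * (f a - μ)^2) / (n * δ^2) := by
        apply pmeas_chebyshev w hw0 hw1 f μ hμ δ hδ n hn
        intro c hc
        have h1 := hE c hc.1 hc.2
        have : ∑ i, (f (c i) - μ) = (∑ i, f (c i)) - n * μ := by
          rw [Finset.sum_sub_distrib]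
          simp [Finset.card_univ, mul_comm]
        rw [this]
        nlinarith [h1]
end Zip

lemma bin_expect {ι : Type*} [Fintype ι] [DecidableEq ι] (M : ℕ) (hM : 0 < M)
    {x x' : ι} (hxx : x' ≠ x) :
    ∑ b : ι → Fin M, (∏ _k : ι, (M:ℝ)⁻¹) * (if b x' = b x then (1:ℝ) else 0)
      = (M:ℝ)⁻¹ := by
  haveI : Nonempty (Fin M) := Fin.pos_iff_nonempty.mp hM
  have hMR : (0:ℝ) < M := by exact_mod_cast hM
  have hw1 : ∑ _a : Fin M, (M:ℝ)⁻¹ = 1 := by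
    rw [Finset.sum_const, Finset.card_univ, Fintype.card_fin, nsmul_eq_mul,
      mul_inv_cancel₀ hMR.ne']
  have hsplit : ∀ b : ι → Fin M, (if b x' = b x then (1:ℝ) else 0)
      = ∑ v : Fin M, (if b x' = v then (1:ℝ) else 0) * (if b x = v then 1 else 0) := by
    intro b
    by_cases h : b x' = b x
    · rw [if_pos h, h]
      rw [Finset.sum_eq_single (b x)] <;> simp +contextual [eq_comm]
    · rw [if_neg h]
      rw [Finset.sum_eq_zero]
      intro v _
      by_cases h1 : b x' = v
      · have : ¬ b x = v := fun hh => h (h1.trans hh.symm)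
        simp [this]
      · simp [h1]
  simp_rw [hsplit, Finset.mul_sum]
  rw [Finset.sum_comm]
  have : ∀ v : Fin M, ∑ b : ι → Fin M,
      (∏ _k : ι, (M:ℝ)⁻¹) * ((if b x' = v then (1:ℝ) else 0) * (if b x = v then 1 else 0))
      = (M:ℝ)⁻¹ * (M:ℝ)⁻¹ := by
    intro v
    rw [sum_pmeas_pair (fun _ : Fin M => (M:ℝ)⁻¹) hw1 hxx
      (fun m => if m = v then (1:ℝ) else 0) (fun m => if m = v then (1:ℝ) else 0)]
    simp [Finset.sum_ite_eq', hMR.ne']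
  simp_rw [this]
  rw [Finset.sum_const, Finset.card_univ, Fintype.card_fin, nsmul_eq_mul]
  field_simp

lemma expect_swap {β γ : Type*} [Fintype β] [Fintype γ] (W : β → ℝ) (F : γ → β → ℝ) :
    ∑ b, W b * ∑ t, F t b = ∑ t, ∑ b, W b * F t b := by
  simp_rw [Finset.mul_sum]
  exact Finset.sum_comm

lemma expect_const_mul {β : Type*} [Fintype β] (W : β → ℝ) (c : ℝ) (s : β → ℝ) :
    ∑ b, W b * (c * s b) = c * ∑ b, W b * s b := by
  rw [Finset.mul_sum]
  exact Finset.sum_congr rfl (fun b _ => by ring)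

set_option maxHeartbeats 1000000 in
theorem wyner_main_n
    {X Y U : Type*} [Fintype X] [Fintype Y] [Fintype U]
    (PXY : X × Y → ℝ)
    (hP0 : ∀ p, 0 ≤ PXY p) (hP1 : ∑ p, PXY p = 1)
    (PUgY : Y → U → ℝ)
    (hU0 : ∀ y u, 0 ≤ PUgY y u) (hU1 : ∀ y, ∑ u, PUgY y u = 1)
    (PY : Y → ℝ) (hPY : ∀ y, PY y = ∑ x, PXY (x, y))
    (PU : U → ℝ) (hPU : ∀ u, PU u = ∑ y, PY y * PUgY y u)
    (PXU : X × U → ℝ) (hPXU : ∀ x u, PXU (x, u) = ∑ y, PXY (x, y) * PUgY y u)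
    (PYU : Y × U → ℝ) (hPYU : ∀ y u, PYU (y, u) = PY y * PUgY y u)
    (HXgU : ℝ) (hH : HXgU = -∑ p : X × U, PXU p * Real.logb 2 (PXU p / PU p.2))
    (IYU : ℝ) (hI : IYU = ∑ p : Y × U, PYU p * Real.logb 2 (PYU p / (PY p.1 * PU p.2)))
    (R₁ R₂ : ℝ) (δ₁ δ₂ : ℝ) (hδ₁ : 0 < δ₁) (hδ₂ : 0 < δ₂)
    (hRa : HXgU + δ₁ + δ₁ ≤ R₁) (hRb : IYU + δ₂ + δ₂ ≤ R₂)
    (n : ℕ) (hn : 0 < n) :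
    ∃ (e₁ : (Fin n → X) → Fin ⌈(2 : ℝ) ^ (n * R₁)⌉₊)
      (e₂ : (Fin n → Y) → Fin ⌈(2 : ℝ) ^ (n * R₂)⌉₊)
      (d : Fin ⌈(2 : ℝ) ^ (n * R₁)⌉₊ × Fin ⌈(2 : ℝ) ^ (n * R₂)⌉₊ → (Fin n → X)),
      ∑ x : Fin n → X, ∑ y : Fin n → Y,
        (if d (e₁ x, e₂ y) ≠ x then ∏ i, PXY (x i, y i) else 0)
        ≤ (∑ p : X × U, PXU p *
              ((if 0 < PXU p then -(Real.logb 2 (PXU p / PU p.2)) else 0) - HXgU)^2)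
            / (n * δ₁^2)
          + 2 * ((∑ p : Y × U, PYU p *
              ((if 0 < PYU p then Real.logb 2 (PYU p / (PY p.1 * PU p.2)) else 0) - IYU)^2)
            / (n * δ₂^2))
          + (2:ℝ)^(-((n:ℝ) * δ₂)/2) + (2:ℝ)^(-((n:ℝ) * δ₁)) := by
  classical
  -- nonemptiness
  have hXYne : Nonempty (X × Y) := by
    by_contra h
    rw [not_nonempty_iff] at h
    have : ∑ p : X × Y, PXY p = 0 := by simp
    rw [this] at hP1; norm_num at hP1
  haveI hXne : Nonempty X := ⟨hXYne.some.1⟩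
  haveI hYne : Nonempty Y := ⟨hXYne.some.2⟩
  haveI hUne : Nonempty U := by
    by_contra h
    rw [not_nonempty_iff] at h
    have := hU1 (Classical.arbitrary Y)
    simp at this
  -- single-letter facts
  have hPY0 : ∀ y, 0 ≤ PY y := fun y => (hPY y) ▸ Finset.sum_nonneg (fun x _ => hP0 _)
  have hPXYle : ∀ x y, PXY (x, y) ≤ PY y := fun x y => (hPY y) ▸
    Finset.single_le_sum (f := fun x => PXY (x, y)) (fun i _ => hP0 _) (Finset.mem_univ x)
  have hUgY1 : ∀ y u, PUgY y u ≤ 1 := fun y u => (hU1 y) ▸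
    Finset.single_le_sum (f := fun u => PUgY y u) (fun i _ => hU0 _ _) (Finset.mem_univ u)
  have hPYU0 : ∀ p : Y × U, 0 ≤ PYU p := fun p =>
    (hPYU p.1 p.2) ▸ mul_nonneg (hPY0 _) (hU0 _ _)
  have hPU0 : ∀ u, 0 ≤ PU u := fun u => (hPU u) ▸
    Finset.sum_nonneg (fun y _ => mul_nonneg (hPY0 _) (hU0 _ _))
  have hPYUmargU : ∀ u, ∑ y, PYU (y, u) = PU u := by
    intro u; rw [hPU]; exact Finset.sum_congr rfl (fun y _ => hPYU y u)
  have hPYUlePU : ∀ y u, PYU (y, u) ≤ PU u := fun y u => (hPYUmargU u) ▸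
    Finset.single_le_sum (f := fun y => PYU (y, u)) (fun i _ => hPYU0 _) (Finset.mem_univ y)
  have hPYUlePY : ∀ y u, PYU (y, u) ≤ PY y := fun y u => (hPYU y u) ▸
    mul_le_of_le_one_right (hPY0 y) (hUgY1 y u)
  have hPYUmargY : ∀ y, ∑ u, PYU (y, u) = PY y := by
    intro y
    have : ∀ u, PYU (y, u) = PY y * PUgY y u := fun u => hPYU y u
    simp_rw [this, ← Finset.mul_sum, hU1, mul_one]
  have hPXU0 : ∀ p : X × U, 0 ≤ PXU p := fun p => (hPXU p.1 p.2) ▸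
    Finset.sum_nonneg (fun y _ => mul_nonneg (hP0 _) (hU0 _ _))
  have hPXUlePU : ∀ x u, PXU (x, u) ≤ PU u := by
    intro x u; rw [hPXU, hPU]
    exact Finset.sum_le_sum (fun y _ =>
      mul_le_mul_of_nonneg_right (hPXYle x y) (hU0 _ _))
  have hPXUmarg : ∀ u, ∑ x, PXU (x, u) = PU u := by
    intro u
    simp_rw [hPXU, hPU]
    rw [Finset.sum_comm]
    exact Finset.sum_congr rfl (fun y _ => by rw [← Finset.sum_mul, ← hPY])
  have hPYsum : ∑ y, PY y = 1 := by
    simp_rw [hPY]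
    rw [← hP1, Fintype.sum_prod_type]
    exact Finset.sum_comm
  have hPUsum : ∑ u, PU u = 1 := by
    simp_rw [← hPYUmargU]
    rw [Finset.sum_comm]
    simp_rw [hPYUmargY]
    exact hPYsum
  -- mean identities
  have hμ₁ : ∑ p : X × U, PXU p *
      (if 0 < PXU p then -(Real.logb 2 (PXU p / PU p.2)) else 0) = HXgU := by
    rw [hH, ← Finset.sum_neg_distrib]
    refine Finset.sum_congr rfl (fun p _ => ?_)
    by_cases hp : 0 < PXU p
    · rw [if_pos hp]; ring
    · have : PXU p = 0 := le_antisymm (not_lt.mp hp) (hPXU0 p)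
      rw [if_neg hp, this]; ring
  have hμ₂ : ∑ p : Y × U, PYU p *
      (if 0 < PYU p then Real.logb 2 (PYU p / (PY p.1 * PU p.2)) else 0) = IYU := by
    rw [hI]
    refine Finset.sum_congr rfl (fun p _ => ?_)
    by_cases hp : 0 < PYU p
    · rw [if_pos hp]
    · have : PYU p = 0 := le_antisymm (not_lt.mp hp) (hPYU0 p)
      rw [if_neg hp, this]; ring
  -- sizes
  set M₁ := ⌈(2:ℝ)^((n:ℝ) * R₁)⌉₊ with hM₁def
  set M₂ := ⌈(2:ℝ)^((n:ℝ) * R₂)⌉₊ with hM₂def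
  have hM₁pos : 0 < M₁ := Nat.ceil_pos.mpr (Real.rpow_pos_of_pos two_pos _)
  have hM₂pos : 0 < M₂ := Nat.ceil_pos.mpr (Real.rpow_pos_of_pos two_pos _)
  have hM₁ge : (2:ℝ)^((n:ℝ)*R₁) ≤ (M₁:ℝ) := Nat.le_ceil _
  have hM₂ge : (2:ℝ)^((n:ℝ)*R₂) ≤ (M₂:ℝ) := Nat.le_ceil _
  have hM₁R : (0:ℝ) < M₁ := by exact_mod_cast hM₁pos
  have hM₂R : (0:ℝ) < M₂ := by exact_mod_cast hM₂pos
  haveI hFM₂ : Nonempty (Fin M₂) := Fin.pos_iff_nonempty.mp hM₂pos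
  -- n-letter objects
  set PYn : (Fin n → Y) → ℝ := fun y => ∏ i, PY (y i) with hPYndef
  set PUn : (Fin n → U) → ℝ := fun u => ∏ i, PU (u i) with hPUndef
  set pXYn : (Fin n → X) → (Fin n → Y) → ℝ := fun x y => ∏ i, PXY (x i, y i) with hpXYdef
  set pxgyn : (Fin n → X) → (Fin n → Y) → ℝ :=
    fun x y => ∏ i, kern PY PXY (x i) (y i) with hpxgydef
  set pxgun : (Fin n → X) → (Fin n → U) → ℝ :=
    fun x u => ∏ i, kern PU PXU (x i) (u i) with hpxgudef
  set Phi : (Fin n → Y) → (Fin n → U) → ℝ :=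
    fun y u => ∏ i, kern PU PYU (y i) (u i) with hPhidef
  -- nonnegativity
  have hPYn0 : ∀ y, 0 ≤ PYn y := fun y => Finset.prod_nonneg (fun i _ => hPY0 _)
  have hPUn0 : ∀ u, 0 ≤ PUn u := fun u => Finset.prod_nonneg (fun i _ => hPU0 _)
  have hpXYn0 : ∀ x y, 0 ≤ pXYn x y := fun x y => Finset.prod_nonneg (fun i _ => hP0 _)
  have hpxgyn0 : ∀ x y, 0 ≤ pxgyn x y :=
    fun x y => Finset.prod_nonneg (fun i _ => kern_nonneg _ _ hP0 _ _)
  have hpxgun0 : ∀ x u, 0 ≤ pxgun x u :=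
    fun x u => Finset.prod_nonneg (fun i _ => kern_nonneg _ _ hPXU0 _ _)
  have hPhi0 : ∀ y u, 0 ≤ Phi y u :=
    fun y u => Finset.prod_nonneg (fun i _ => kern_nonneg _ _ hPYU0 _ _)
  -- factorization and normalization facts
  have hpXYfac : ∀ x y, pXYn x y = PYn y * pxgyn x y := by
    intro x y
    rw [hpXYdef, hPYndef, hpxgydef, ← Finset.prod_mul_distrib]
    exact Finset.prod_congr rfl (fun i _ =>
      (kern_mul PY PXY hP0 (fun a b => hPXYle a b) (x i) (y i)).symm)
  have hpxgyn_sum : ∀ y, ∑ x, pxgyn x y = 1 := by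
    intro y
    rw [hpxgydef, sum_prod_eq_prod_sum (fun i a => kern PY PXY a (y i))]
    exact Finset.prod_eq_one (fun i _ => kern_sum_one PY PXY (fun b => (hPY b).symm) (y i))
  have hpxgun_sum : ∀ u, ∑ x, pxgun x u = 1 := by
    intro u
    rw [hpxgudef, sum_prod_eq_prod_sum (fun i a => kern PU PXU a (u i))]
    exact Finset.prod_eq_one (fun i _ => kern_sum_one PU PXU hPXUmarg (u i))
  have hPUn_sum : ∑ u : Fin n → U, PUn u = 1 := by
    rw [hPUndef, sum_prod_eq_prod_sum (fun _ a => PU a)]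
    exact Finset.prod_eq_one (fun i _ => hPUsum)
  have hPYn_sum : ∑ y : Fin n → Y, PYn y = 1 := by
    rw [hPYndef, sum_prod_eq_prod_sum (fun _ a => PY a)]
    exact Finset.prod_eq_one (fun i _ => hPYsum)
  have hpXYn_sum : ∑ x : Fin n → X, ∑ y : Fin n → Y, pXYn x y = 1 := by
    rw [hpXYdef, ← sum_zip n (fun c => ∏ i, PXY (c i)),
      sum_prod_eq_prod_sum (fun _ a => PXY a)]
    exact Finset.prod_eq_one (fun i _ => hP1)
  have hPhi_marg : ∀ y, ∑ u : Fin n → U, PUn u * Phi y u = PYn y := by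
    intro y
    have : ∀ u : Fin n → U, PUn u * Phi y u
        = ∏ i, (PU (u i) * kern PU PYU (y i) (u i)) := by
      intro u; rw [hPUndef, hPhidef, Finset.prod_mul_distrib]
    simp_rw [this]
    rw [sum_prod_eq_prod_sum (fun i a => PU a * kern PU PYU (y i) a), hPYndef]
    refine Finset.prod_congr rfl (fun i _ => ?_)
    have : ∀ a, PU a * kern PU PYU (y i) a = PYU (y i, a) :=
      fun a => kern_mul PU PYU hPYU0 (fun b c => hPYUlePU b c) (y i) a
    simp_rw [this]
    exact hPYUmargY (y i)
  have hPXUn_eq : ∀ (x : Fin n → X) (u : Fin n → U),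
      PUn u * pxgun x u = ∏ i, PXU (x i, u i) := by
    intro x u
    rw [hPUndef, hpxgudef, ← Finset.prod_mul_distrib]
    exact Finset.prod_congr rfl (fun i _ =>
      kern_mul PU PXU hPXU0 (fun a b => hPXUlePU a b) (x i) (u i))
  have hPYUn_eq : ∀ (y : Fin n → Y) (u : Fin n → U),
      PUn u * Phi y u = ∏ i, PYU (y i, u i) := by
    intro y u
    rw [hPUndef, hPhidef, ← Finset.prod_mul_distrib]
    exact Finset.prod_congr rfl (fun i _ =>
      kern_mul PU PYU hPYU0 (fun a b => hPYUlePU a b) (y i) (u i))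
  -- single-letter Markov chain identity
  have hchain1 : ∀ (u₀ : U), 0 < PU u₀ → ∀ x₀ : X,
      ∑ b, kern PU PYU b u₀ * kern PY PXY x₀ b = kern PU PXU x₀ u₀ := by
    intro u₀ hu x₀
    have hker : ∀ b, kern PU PYU b u₀ * kern PY PXY x₀ b
        = (PXY (x₀, b) * PUgY b u₀) / PU u₀ := by
      intro b
      have h1 : kern PU PYU b u₀ = PYU (b, u₀) / PU u₀ := by unfold kern; rw [if_pos hu]
      rw [h1, hPYU]
      have : PY b * PUgY b u₀ / PU u₀ * kern PY PXY x₀ b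
          = (PY b * kern PY PXY x₀ b) * PUgY b u₀ / PU u₀ := by ring
      rw [this, kern_mul PY PXY hP0 (fun a c => hPXYle a c)]
    simp_rw [hker]
    rw [← Finset.sum_div, ← hPXU]
    unfold kern
    rw [if_pos hu]
  have hchain : ∀ (u : Fin n → U), (∀ i, 0 < PU (u i)) → ∀ x : Fin n → X,
      ∑ y : Fin n → Y, Phi y u * pxgyn x y = pxgun x u := by
    intro u hu x
    have : ∀ y : Fin n → Y, Phi y u * pxgyn x y
        = ∏ i, (kern PU PYU (y i) (u i) * kern PY PXY (x i) (y i)) := by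
      intro y; rw [hPhidef, hpxgydef, Finset.prod_mul_distrib]
    simp_rw [this]
    rw [sum_prod_eq_prod_sum (fun i b => kern PU PYU b (u i) * kern PY PXY (x i) b),
      hpxgudef]
    exact Finset.prod_congr rfl (fun i _ => hchain1 (u i) (hu i) (x i))
  -- the scheme
  set τ₁ : ℝ := (n:ℝ) * (HXgU + δ₁) with hτ₁def
  set SDec : (Fin n → X) → (Fin n → U) → Prop :=
    fun x u => (2:ℝ)^(-τ₁) ≤ pxgun x u with hSdef
  set q : (Fin M₂ → (Fin n → U)) → (Fin n → Y) → Fin M₂ → ℝ :=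
    fun C y j => if 0 < ∑ j', Phi y (C j') then Phi y (C j) / ∑ j', Phi y (C j')
      else (M₂:ℝ)⁻¹ with hqdef
  set dec : (Fin M₂ → (Fin n → U)) → ((Fin n → X) → Fin M₁) →
      Fin M₁ → Fin M₂ → (Fin n → X) :=
    fun C b v j => if h : ∃ x, b x = v ∧ SDec x (C j) then h.choose
      else Classical.arbitrary _ with hdecdef
  set errI : (Fin M₂ → (Fin n → U)) → ((Fin n → X) → Fin M₁) →
      (Fin n → X) → Fin M₂ → ℝ :=
    fun C b x j => if dec C b (b x) j ≠ x then (1:ℝ) else 0 with herrdef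
  set Err : (Fin M₂ → (Fin n → U)) → ((Fin n → X) → Fin M₁) → ℝ :=
    fun C b => ∑ x, ∑ y, pXYn x y * ∑ j, q C y j * errI C b x j with hErrdef
  set W2 : (Fin M₂ → (Fin n → U)) → ℝ := fun C => ∏ j, PUn (C j) with hW2def
  set Wb : ((Fin n → X) → Fin M₁) → ℝ :=
    fun _b => ∏ _x : Fin n → X, (M₁:ℝ)⁻¹ with hWbdef
  have hq0 : ∀ C y j, 0 ≤ q C y j := by
    intro C y j
    rw [hqdef]
    dsimp only
    split_ifs with h
    · exact div_nonneg (hPhi0 _ _) h.le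
    · positivity
  have hqsum : ∀ C y, ∑ j, q C y j = 1 := by
    intro C y
    rw [hqdef]
    dsimp only
    split_ifs with h
    · rw [← Finset.sum_div, div_self h.ne']
    · rw [Finset.sum_const, Finset.card_univ, Fintype.card_fin, nsmul_eq_mul,
        mul_inv_cancel₀ hM₂R.ne']
  have hW20 : ∀ C, 0 ≤ W2 C := fun C => Finset.prod_nonneg (fun j _ => hPUn0 _)
  have hW2sum : ∑ C, W2 C = 1 := sum_pmeas_one PUn hPUn_sum
  have hWb0 : ∀ b, 0 ≤ Wb b := fun b => Finset.prod_nonneg (fun _ _ => by positivity)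
  have hWbsum : ∑ b, Wb b = 1 := by
    have hw1 : ∑ _a : Fin M₁, (M₁:ℝ)⁻¹ = 1 := by
      rw [Finset.sum_const, Finset.card_univ, Fintype.card_fin, nsmul_eq_mul,
        mul_inv_cancel₀ hM₁R.ne']
    exact sum_pmeas_one (fun _ : Fin M₁ => (M₁:ℝ)⁻¹) hw1
  have herr01 : ∀ C b x j, 0 ≤ errI C b x j ∧ errI C b x j ≤ 1 := by
    intro C b x j
    rw [herrdef]
    dsimp only
    split_ifs <;> norm_num
  -- decoder decomposition
  have hdecomp : ∀ C b (x : Fin n → X) (j : Fin M₂), errI C b x j ≤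
      (if ¬ SDec x (C j) then (1:ℝ) else 0)
      + ∑ x', (if x' ≠ x ∧ b x' = b x ∧ SDec x' (C j) then (1:ℝ) else 0) := by
    intro C b x j
    have hsum0 : (0:ℝ) ≤ ∑ x', (if x' ≠ x ∧ b x' = b x ∧ SDec x' (C j) then (1:ℝ) else 0) :=
      Finset.sum_nonneg (fun x' _ => by split_ifs <;> norm_num)
    by_cases hS : SDec x (C j)
    · by_cases hcomp : ∃ x', x' ≠ x ∧ b x' = b x ∧ SDec x' (C j)
      · obtain ⟨x', hx'⟩ := hcomp
        have h1 : (1:ℝ) ≤ ∑ x', (if x' ≠ x ∧ b x' = b x ∧ SDec x' (C j) then (1:ℝ) else 0) := by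
          calc (1:ℝ) = (if x' ≠ x ∧ b x' = b x ∧ SDec x' (C j) then (1:ℝ) else 0) := by
                rw [if_pos hx']
            _ ≤ _ := Finset.single_le_sum (f := fun x' =>
                (if x' ≠ x ∧ b x' = b x ∧ SDec x' (C j) then (1:ℝ) else 0))
                (fun i _ => by split_ifs <;> norm_num) (Finset.mem_univ x')
        calc errI C b x j ≤ 1 := (herr01 C b x j).2
          _ ≤ _ := le_add_of_nonneg_of_le (by split_ifs <;> norm_num) h1
      · -- no competitor and x is typical: decoding succeeds
        have hex : ∃ x', b x' = b x ∧ SDec x' (C j) := ⟨x, rfl, hS⟩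
        have hch := hex.choose_spec
        have : dec C b (b x) j = hex.choose := by
          rw [hdecdef]
          dsimp only
          rw [dif_pos hex]
        have hxx : hex.choose = x := by
          by_contra hne
          exact hcomp ⟨hex.choose, hne, hch.1, hch.2⟩
        have hzero : errI C b x j = 0 := by
          rw [herrdef]
          dsimp only
          rw [if_neg]
          push_neg
          rw [this, hxx]
        rw [hzero]
        exact le_add_of_nonneg_of_le (by split_ifs <;> norm_num) hsum0
    · rw [if_pos hS]
      linarith [(herr01 C b x j).2, hsum0]
  -- reduce to bounding the average error over codebooks and binnings
  suffices key : ∑ C, W2 C * ∑ b, Wb b * Err C b ≤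
      (∑ p : X × U, PXU p *
          ((if 0 < PXU p then -(Real.logb 2 (PXU p / PU p.2)) else 0) - HXgU)^2)
        / (n * δ₁^2)
      + 2 * ((∑ p : Y × U, PYU p *
          ((if 0 < PYU p then Real.logb 2 (PYU p / (PY p.1 * PU p.2)) else 0) - IYU)^2)
        / (n * δ₂^2))
      + (2:ℝ)^(-((n:ℝ) * δ₂)/2) + (2:ℝ)^(-((n:ℝ) * δ₁)) by
    obtain ⟨C, hC⟩ := exists_le_of_expect_le W2 _ hW20 hW2sum key
    obtain ⟨b, hb⟩ := exists_le_of_expect_le Wb (Err C) hWb0 hWbsum hC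
    have hmin : ∀ y : Fin n → Y, ∃ j : Fin M₂, ∀ j' : Fin M₂,
        (∑ x, pXYn x y * errI C b x j) ≤ ∑ x, pXYn x y * errI C b x j' := by
      intro y
      obtain ⟨j, _, hj⟩ := Finset.exists_min_image Finset.univ
        (fun j => ∑ x, pXYn x y * errI C b x j) ⟨Classical.arbitrary _, Finset.mem_univ _⟩
      exact ⟨j, fun j' => hj j' (Finset.mem_univ _)⟩
    refine ⟨b, fun y => (hmin y).choose, fun p => dec C b p.1 p.2, ?_⟩
    have hstep1 : ∑ x : Fin n → X, ∑ y : Fin n → Y,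
        (if dec C b (b x) ((hmin y).choose) ≠ x then ∏ i, PXY (x i, y i) else 0)
        = ∑ y : Fin n → Y, ∑ x : Fin n → X, pXYn x y * errI C b x ((hmin y).choose) := by
      rw [Finset.sum_comm]
      refine Finset.sum_congr rfl (fun y _ => Finset.sum_congr rfl (fun x _ => ?_))
      simp only [herrdef, hpXYdef]
      split_ifs <;> ring
    rw [hstep1]
    have hswap : Err C b = ∑ y, ∑ j, q C y j * ∑ x, pXYn x y * errI C b x j := by
      rw [hErrdef]
      dsimp only
      rw [Finset.sum_comm]
      refine Finset.sum_congr rfl (fun y _ => ?_)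
      simp_rw [Finset.mul_sum]
      rw [Finset.sum_comm]
      exact Finset.sum_congr rfl (fun j _ => Finset.sum_congr rfl (fun x _ => by ring))
    have hstep2 : ∑ y, ∑ x, pXYn x y * errI C b x ((hmin y).choose) ≤ Err C b := by
      rw [hswap]
      refine Finset.sum_le_sum (fun y _ => ?_)
      calc ∑ x, pXYn x y * errI C b x ((hmin y).choose)
          = ∑ j, q C y j * ∑ x, pXYn x y * errI C b x ((hmin y).choose) := by
            rw [← Finset.sum_mul, hqsum C y, one_mul]
        _ ≤ ∑ j, q C y j * ∑ x, pXYn x y * errI C b x j :=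
            Finset.sum_le_sum (fun j _ => mul_le_mul_of_nonneg_left
              ((hmin y).choose_spec j) (hq0 C y j))
    exact hstep2.trans hb
  -- split the error into the two error events
  set ErrA : (Fin M₂ → (Fin n → U)) → ℝ := fun C => ∑ x, ∑ y, pXYn x y *
      ∑ j, q C y j * (if ¬ SDec x (C j) then (1:ℝ) else 0) with hErrAdef
  set ErrB : (Fin M₂ → (Fin n → U)) → ((Fin n → X) → Fin M₁) → ℝ := fun C b =>
      ∑ x, ∑ y, pXYn x y * ∑ j, q C y j *
        ∑ x', (if x' ≠ x ∧ b x' = b x ∧ SDec x' (C j) then (1:ℝ) else 0) with hErrBdef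
  have hErrsplit : ∀ C b, Err C b ≤ ErrA C + ErrB C b := by
    intro C b
    rw [hErrdef, hErrAdef, hErrBdef]
    dsimp only
    rw [← Finset.sum_add_distrib]
    refine Finset.sum_le_sum (fun x _ => ?_)
    rw [← Finset.sum_add_distrib]
    refine Finset.sum_le_sum (fun y _ => ?_)
    rw [← mul_add]
    refine mul_le_mul_of_nonneg_left ?_ (hpXYn0 x y)
    rw [← Finset.sum_add_distrib]
    refine Finset.sum_le_sum (fun j _ => ?_)
    rw [← mul_add]
    exact mul_le_mul_of_nonneg_left (hdecomp C b x j) (hq0 C y j)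
  -- counting bound for the decoding sets
  have hcount : ∀ u : Fin n → U, ∑ x' : Fin n → X,
      (if SDec x' u then (1:ℝ) else 0) ≤ (2:ℝ)^τ₁ := by
    intro u
    have hpt : ∀ x' : Fin n → X,
        (if SDec x' u then (1:ℝ) else 0) ≤ (2:ℝ)^τ₁ * pxgun x' u := by
      intro x'
      split_ifs with h
      · rw [hSdef] at h
        have h2 : (2:ℝ)^τ₁ * (2:ℝ)^(-τ₁) = 1 := by
          rw [← Real.rpow_add two_pos]
          simp
        calc (1:ℝ) = (2:ℝ)^τ₁ * (2:ℝ)^(-τ₁) := h2.symm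
          _ ≤ (2:ℝ)^τ₁ * pxgun x' u :=
            mul_le_mul_of_nonneg_left h (Real.rpow_nonneg (by norm_num) _)
      · exact mul_nonneg (Real.rpow_nonneg (by norm_num) _) (hpxgun0 x' u)
    calc ∑ x' : Fin n → X, (if SDec x' u then (1:ℝ) else 0)
        ≤ ∑ x' : Fin n → X, (2:ℝ)^τ₁ * pxgun x' u := Finset.sum_le_sum (fun x' _ => hpt x')
      _ = (2:ℝ)^τ₁ := by rw [← Finset.mul_sum, hpxgun_sum u, mul_one]
  -- expected value of a random bin collision
  have hbin1 : ∀ (x x' : Fin n → X) (P : Prop) (inst : Decidable P),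
      ∑ b, Wb b * (if x' ≠ x ∧ b x' = b x ∧ P then (1:ℝ) else 0)
        ≤ (if P then (1:ℝ) else 0) * (M₁:ℝ)⁻¹ := by
    intro x x' P inst
    by_cases hP : P
    · by_cases hxx : x' = x
      · have hz : ∀ b : (Fin n → X) → Fin M₁,
            Wb b * (if x' ≠ x ∧ b x' = b x ∧ P then (1:ℝ) else 0) = 0 := by
          intro b
          rw [if_neg (by simp [hxx]), mul_zero]
        rw [Finset.sum_eq_zero (fun b _ => hz b), if_pos hP, one_mul]
        positivity
      · have hre : ∀ b : (Fin n → X) → Fin M₁,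
            (if x' ≠ x ∧ b x' = b x ∧ P then (1:ℝ) else 0)
              = (if b x' = b x then (1:ℝ) else 0) := by
          intro b
          by_cases hbb : b x' = b x <;> simp [hxx, hbb, hP]
        simp_rw [hre, hWbdef]
        rw [bin_expect M₁ hM₁pos hxx, if_pos hP, one_mul]
    · have hz : ∀ b : (Fin n → X) → Fin M₁,
          Wb b * (if x' ≠ x ∧ b x' = b x ∧ P then (1:ℝ) else 0) = 0 := by
        intro b
        rw [if_neg (by simp [hP]), mul_zero]
      rw [Finset.sum_eq_zero (fun b _ => hz b), if_neg hP, zero_mul]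
  -- numeric bound for the binning term
  have hnum1 : (2:ℝ)^τ₁ * (M₁:ℝ)⁻¹ ≤ (2:ℝ)^(-((n:ℝ)*δ₁)) := by
    have h1 : (M₁:ℝ)⁻¹ ≤ ((2:ℝ)^((n:ℝ)*R₁))⁻¹ :=
      inv_anti₀ (Real.rpow_pos_of_pos two_pos _) hM₁ge
    calc (2:ℝ)^τ₁ * (M₁:ℝ)⁻¹ ≤ (2:ℝ)^τ₁ * ((2:ℝ)^((n:ℝ)*R₁))⁻¹ :=
        mul_le_mul_of_nonneg_left h1 (Real.rpow_nonneg (by norm_num) _)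
      _ = (2:ℝ)^(τ₁ - (n:ℝ)*R₁) := by
        rw [Real.rpow_sub two_pos]
        rfl
      _ ≤ (2:ℝ)^(-((n:ℝ)*δ₁)) := by
        apply (Real.rpow_le_rpow_left_iff one_lt_two).mpr
        rw [hτ₁def]
        have hn0 : (0:ℝ) ≤ (n:ℝ) := Nat.cast_nonneg n
        nlinarith
  -- expected binning error
  have hErrB : ∀ C, ∑ b, Wb b * ErrB C b ≤ (2:ℝ)^(-((n:ℝ)*δ₁)) := by
    intro C
    have hpush : ∑ b, Wb b * ErrB C b = ∑ x, ∑ y, pXYn x y * ∑ j, q C y j *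
        ∑ x', (∑ b, Wb b * (if x' ≠ x ∧ b x' = b x ∧ SDec x' (C j) then (1:ℝ) else 0)) := by
      rw [hErrBdef]
      dsimp only
      rw [expect_swap Wb (fun x b => ∑ y, pXYn x y * ∑ j, q C y j *
        ∑ x', (if x' ≠ x ∧ b x' = b x ∧ SDec x' (C j) then (1:ℝ) else 0))]
      refine Finset.sum_congr rfl (fun x _ => ?_)
      rw [expect_swap Wb (fun y b => pXYn x y * ∑ j, q C y j *
        ∑ x', (if x' ≠ x ∧ b x' = b x ∧ SDec x' (C j) then (1:ℝ) else 0))]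
      refine Finset.sum_congr rfl (fun y _ => ?_)
      rw [expect_const_mul Wb (pXYn x y) _]
      congr 1
      rw [expect_swap Wb (fun j b => q C y j *
        ∑ x', (if x' ≠ x ∧ b x' = b x ∧ SDec x' (C j) then (1:ℝ) else 0))]
      refine Finset.sum_congr rfl (fun j _ => ?_)
      rw [expect_const_mul Wb (q C y j) _]
      congr 1
      exact expect_swap Wb (fun x' b =>
        (if x' ≠ x ∧ b x' = b x ∧ SDec x' (C j) then (1:ℝ) else 0))
    rw [hpush]
    have hinner : ∀ (x : Fin n → X) (j : Fin M₂),
        ∑ x', (∑ b, Wb b * (if x' ≠ x ∧ b x' = b x ∧ SDec x' (C j) then (1:ℝ) else 0))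
          ≤ (2:ℝ)^(-((n:ℝ)*δ₁)) := by
      intro x j
      calc ∑ x', (∑ b, Wb b * (if x' ≠ x ∧ b x' = b x ∧ SDec x' (C j) then (1:ℝ) else 0))
          ≤ ∑ x', (if SDec x' (C j) then (1:ℝ) else 0) * (M₁:ℝ)⁻¹ :=
            Finset.sum_le_sum (fun x' _ => hbin1 x x' (SDec x' (C j)) _)
        _ = (∑ x', (if SDec x' (C j) then (1:ℝ) else 0)) * (M₁:ℝ)⁻¹ :=
            (Finset.sum_mul _ _ _).symm
        _ ≤ (2:ℝ)^τ₁ * (M₁:ℝ)⁻¹ :=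
            mul_le_mul_of_nonneg_right (hcount (C j)) (by positivity)
        _ ≤ (2:ℝ)^(-((n:ℝ)*δ₁)) := hnum1
    calc ∑ x, ∑ y, pXYn x y * ∑ j, q C y j *
          ∑ x', (∑ b, Wb b * (if x' ≠ x ∧ b x' = b x ∧ SDec x' (C j) then (1:ℝ) else 0))
        ≤ ∑ x, ∑ y, pXYn x y * ∑ j, q C y j * (2:ℝ)^(-((n:ℝ)*δ₁)) := by
          refine Finset.sum_le_sum (fun x _ => Finset.sum_le_sum (fun y _ => ?_))
          refine mul_le_mul_of_nonneg_left ?_ (hpXYn0 x y)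
          refine Finset.sum_le_sum (fun j _ => ?_)
          exact mul_le_mul_of_nonneg_left (hinner x j) (hq0 C y j)
      _ = (2:ℝ)^(-((n:ℝ)*δ₁)) := by
          have : ∀ (y : Fin n → Y),
              ∑ j, q C y j * (2:ℝ)^(-((n:ℝ)*δ₁)) = (2:ℝ)^(-((n:ℝ)*δ₁)) := by
            intro y
            rw [← Finset.sum_mul, hqsum C y, one_mul]
          simp_rw [this]
          have : ∀ x : Fin n → X, ∑ y, pXYn x y * (2:ℝ)^(-((n:ℝ)*δ₁))
              = (∑ y, pXYn x y) * (2:ℝ)^(-((n:ℝ)*δ₁)) := fun x => (Finset.sum_mul _ _ _).symm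
          simp_rw [this, ← Finset.sum_mul, hpXYn_sum, one_mul]
  -- comparison of the likelihood encoder with the idealized distribution
  set Qy : (Fin M₂ → (Fin n → U)) → (Fin n → Y) → ℝ :=
    fun C y => (M₂:ℝ)⁻¹ * ∑ j, Phi y (C j) with hQydef
  set g : (Fin n → U) → (Fin n → Y) → ℝ :=
    fun u y => ∑ x, pxgyn x y * (if ¬ SDec x u then (1:ℝ) else 0) with hgdef
  set IA : (Fin M₂ → (Fin n → U)) → ℝ :=
    fun C => ∑ j, ∑ y, (M₂:ℝ)⁻¹ * Phi y (C j) * g (C j) y with hIAdef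
  set D : (Fin M₂ → (Fin n → U)) → ℝ :=
    fun C => ∑ y, |PYn y - Qy C y| with hDdef
  have hg0 : ∀ u y, 0 ≤ g u y := by
    intro u y
    rw [hgdef]
    exact Finset.sum_nonneg (fun x _ => mul_nonneg (hpxgyn0 x y) (by split_ifs <;> norm_num))
  have hg1 : ∀ u y, g u y ≤ 1 := by
    intro u y
    rw [hgdef]
    dsimp only
    calc ∑ x, pxgyn x y * (if ¬ SDec x u then (1:ℝ) else 0)
        ≤ ∑ x, pxgyn x y := Finset.sum_le_sum (fun x _ =>
          mul_le_of_le_one_right (hpxgyn0 x y) (by split_ifs <;> norm_num))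
      _ = 1 := hpxgyn_sum y
  have hQq : ∀ C y j, Qy C y * q C y j = (M₂:ℝ)⁻¹ * Phi y (C j) := by
    intro C y j
    rw [hQydef, hqdef]
    dsimp only
    split_ifs with h
    · rw [mul_assoc, mul_div_assoc']
      congr 1
      rw [mul_comm, mul_div_assoc, div_self h.ne', mul_one]
    · have hden : ∑ j', Phi y (C j') = 0 :=
        le_antisymm (not_lt.mp h) (Finset.sum_nonneg (fun j' _ => hPhi0 _ _))
      have hj : Phi y (C j) = 0 := by
        have := (Finset.sum_eq_zero_iff_of_nonneg
          (fun j' _ => hPhi0 y (C j'))).mp hden j (Finset.mem_univ j)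
        exact this
      rw [hden, hj]
      ring
  have hErrA_eq : ∀ C, ErrA C = ∑ y, ∑ j, PYn y * q C y j * g (C j) y := by
    intro C
    rw [hErrAdef]
    dsimp only
    rw [Finset.sum_comm]
    refine Finset.sum_congr rfl (fun y _ => ?_)
    simp_rw [hpXYfac, hgdef, Finset.mul_sum]
    rw [Finset.sum_comm]
    refine Finset.sum_congr rfl (fun j _ => ?_)
    exact Finset.sum_congr rfl (fun x _ => by ring)
  have hErrA : ∀ C, ErrA C ≤ IA C + D C := by
    intro C
    rw [hErrA_eq]
    have hpt : ∀ y j, PYn y * q C y j * g (C j) y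
        ≤ Qy C y * q C y j * g (C j) y + |PYn y - Qy C y| * q C y j := by
      intro y j
      have h1 : PYn y ≤ Qy C y + |PYn y - Qy C y| := by
        have := le_abs_self (PYn y - Qy C y)
        linarith
      have h2 : PYn y * q C y j * g (C j) y
          ≤ (Qy C y + |PYn y - Qy C y|) * q C y j * g (C j) y := by
        exact mul_le_mul_of_nonneg_right (mul_le_mul_of_nonneg_right h1 (hq0 C y j)) (hg0 _ _)
      have h3 : |PYn y - Qy C y| * q C y j * g (C j) y ≤ |PYn y - Qy C y| * q C y j :=
        mul_le_of_le_one_right (mul_nonneg (abs_nonneg _) (hq0 C y j)) (hg1 _ _)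
      nlinarith [h2, h3]
    calc ∑ y, ∑ j, PYn y * q C y j * g (C j) y
        ≤ ∑ y, ∑ j, (Qy C y * q C y j * g (C j) y + |PYn y - Qy C y| * q C y j) :=
          Finset.sum_le_sum (fun y _ => Finset.sum_le_sum (fun j _ => hpt y j))
      _ = (∑ y, ∑ j, Qy C y * q C y j * g (C j) y)
          + ∑ y, ∑ j, |PYn y - Qy C y| * q C y j := by
          rw [← Finset.sum_add_distrib]
          exact Finset.sum_congr rfl (fun y _ => Finset.sum_add_distrib)
      _ = IA C + D C := by
          congr 1
          · rw [hIAdef]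
            dsimp only
            rw [Finset.sum_comm]
            exact Finset.sum_congr rfl (fun j _ => Finset.sum_congr rfl (fun y _ => by
              rw [← hQq C y j]))
          · rw [hDdef]
            refine Finset.sum_congr rfl (fun y _ => ?_)
            have : ∀ j, |PYn y - Qy C y| * q C y j = q C y j * |PYn y - Qy C y| :=
              fun j => mul_comm _ _
            simp_rw [this]
            rw [← Finset.sum_mul, hqsum C y, one_mul]
  -- expected idealized error: conditional AEP
  have hIAbound : ∑ C, W2 C * IA C ≤
      (∑ p : X × U, PXU p *
        ((if 0 < PXU p then -(Real.logb 2 (PXU p / PU p.2)) else 0) - HXgU)^2)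
      / (n * δ₁^2) := by
    set G : (Fin n → U) → ℝ := fun u => ∑ y, (M₂:ℝ)⁻¹ * Phi y u * g u y with hGdef
    have h1 : ∑ C, W2 C * IA C = (M₂:ℝ) * ∑ u, PUn u * G u := by
      rw [hIAdef]
      dsimp only
      rw [expect_swap W2 (fun j C => ∑ y, (M₂:ℝ)⁻¹ * Phi y (C j) * g (C j) y)]
      have : ∀ j : Fin M₂, ∑ C, W2 C * ∑ y, (M₂:ℝ)⁻¹ * Phi y (C j) * g (C j) y
          = ∑ u, PUn u * G u := by
        intro j
        rw [hW2def]
        exact sum_pmeas_single PUn hPUn_sum j G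
      simp_rw [this]
      rw [Finset.sum_const, Finset.card_univ, Fintype.card_fin, nsmul_eq_mul]
    have h2 : ∀ u : Fin n → U, PUn u * G u
        = (M₂:ℝ)⁻¹ * ∑ x, ((∏ i, PXU (x i, u i)) * (if ¬ SDec x u then (1:ℝ) else 0)) := by
      intro u
      by_cases hu : ∀ i, 0 < PU (u i)
      · have hswap : ∑ y, Phi y u * g u y
            = ∑ x, pxgun x u * (if ¬ SDec x u then (1:ℝ) else 0) := by
          rw [hgdef]
          dsimp only
          simp_rw [Finset.mul_sum]
          rw [Finset.sum_comm]
          refine Finset.sum_congr rfl (fun x _ => ?_)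
          have hstep : ∑ y, Phi y u * (pxgyn x y * (if ¬ SDec x u then (1:ℝ) else 0))
              = (∑ y, Phi y u * pxgyn x y) * (if ¬ SDec x u then (1:ℝ) else 0) := by
            rw [Finset.sum_mul]
            exact Finset.sum_congr rfl (fun y _ => by ring)
          rw [hstep, hchain u hu x]
        have hpull : G u = (M₂:ℝ)⁻¹ * ∑ y, Phi y u * g u y := by
          rw [hGdef, Finset.mul_sum]
          exact Finset.sum_congr rfl (fun y _ => by ring)
        rw [hpull, hswap, ← mul_assoc, mul_comm (PUn u) ((M₂:ℝ)⁻¹), mul_assoc,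
          Finset.mul_sum]
        congr 1
        refine Finset.sum_congr rfl (fun x _ => ?_)
        rw [← mul_assoc, hPXUn_eq]
      · push_neg at hu
        obtain ⟨i0, hi0⟩ := hu
        have hPU0i : PU (u i0) = 0 := le_antisymm hi0 (hPU0 _)
        have hPUn_z : PUn u = 0 := by
          rw [hPUndef]
          exact Finset.prod_eq_zero (Finset.mem_univ i0) hPU0i
        have hXz : ∀ x : Fin n → X, (∏ i, PXU (x i, u i)) = 0 := fun x =>
          Finset.prod_eq_zero (Finset.mem_univ i0)
            (le_antisymm (hPU0i ▸ hPXUlePU (x i0) (u i0)) (hPXU0 _))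
        rw [hPUn_z, zero_mul]
        have : ∀ x : Fin n → X,
            (∏ i, PXU (x i, u i)) * (if ¬ SDec x u then (1:ℝ) else 0) = 0 := by
          intro x; rw [hXz x, zero_mul]
        rw [Finset.sum_eq_zero (fun x _ => this x), mul_zero]
    have h3 : ∑ C, W2 C * IA C
        = ∑ u : Fin n → U, ∑ x : Fin n → X,
            ((∏ i, PXU (x i, u i)) * (if ¬ SDec x u then (1:ℝ) else 0)) := by
      rw [h1]
      simp_rw [h2]
      rw [← Finset.mul_sum, ← mul_assoc, mul_inv_cancel₀ hM₂R.ne', one_mul]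
    have h4 : ∑ C, W2 C * IA C
        = ∑ c : Fin n → X × U,
            (if ¬ SDec (fun i => (c i).1) (fun i => (c i).2)
              then ∏ k, PXU (c k) else 0) := by
      rw [h3, Finset.sum_comm]
      have hz := sum_zip (A := X) (B := U) n (fun c =>
        (if ¬ SDec (fun i => (c i).1) (fun i => (c i).2) then ∏ k, PXU (c k) else 0))
      rw [hz]
      refine Finset.sum_congr rfl (fun x _ => Finset.sum_congr rfl (fun u _ => ?_))
      show (∏ i, PXU (x i, u i)) * (if ¬ SDec x u then (1:ℝ) else 0)
        = (if ¬ SDec x u then ∏ k, PXU (x k, u k) else 0)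
      split_ifs <;> ring
    have hsum1 : ∑ p : X × U, PXU p = 1 := by
      rw [Fintype.sum_prod_type]
      calc ∑ a : X, ∑ b : U, PXU (a, b) = ∑ b : U, ∑ a : X, PXU (a, b) := Finset.sum_comm
        _ = ∑ b : U, PU b := Finset.sum_congr rfl (fun b _ => hPXUmarg b)
        _ = 1 := hPUsum
    have hE : ∀ c : Fin n → X × U,
        (¬ SDec (fun i => (c i).1) fun i => (c i).2) → (∀ i, 0 < PXU (c i)) →
        (n:ℝ) * (HXgU + δ₁)
          < ∑ i, (if 0 < PXU (c i) then -(Real.logb 2 (PXU (c i) / PU (c i).2)) else 0) := by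
      intro c hEc hsupp
      have hker : ∀ i : Fin n,
          kern PU PXU (c i).1 (c i).2 = PXU (c i) / PU (c i).2
            ∧ 0 < kern PU PXU (c i).1 (c i).2 := by
        intro i
        have hp : 0 < PXU ((c i).1, (c i).2) := by simpa using hsupp i
        have := kern_pos PU PXU hPXU0 (fun a b => hPXUlePU a b) hp
        simpa using this
      have hprodpos : 0 < ∏ i, kern PU PXU (c i).1 (c i).2 :=
        Finset.prod_pos (fun i _ => (hker i).2)
      have hlt : (∏ i, kern PU PXU (c i).1 (c i).2) < (2:ℝ)^(-τ₁) := by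
        rw [hSdef] at hEc
        exact not_le.mp hEc
      have hlog : Real.logb 2 (∏ i, kern PU PXU (c i).1 (c i).2) < -τ₁ :=
        (Real.logb_lt_iff_lt_rpow one_lt_two hprodpos).mpr hlt
      have hlogsum : Real.logb 2 (∏ i, kern PU PXU (c i).1 (c i).2)
          = ∑ i, Real.logb 2 (kern PU PXU (c i).1 (c i).2) :=
        Real.logb_prod Finset.univ _ (fun i _ => (hker i).2.ne')
      have hf : ∀ i : Fin n,
          (if 0 < PXU (c i) then -(Real.logb 2 (PXU (c i) / PU (c i).2)) else 0)
            = -(Real.logb 2 (kern PU PXU (c i).1 (c i).2)) := by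
        intro i
        rw [if_pos (hsupp i), (hker i).1]
      calc (n:ℝ) * (HXgU + δ₁) = τ₁ := by rw [hτ₁def]
        _ < -(Real.logb 2 (∏ i, kern PU PXU (c i).1 (c i).2)) := by linarith
        _ = ∑ i, -(Real.logb 2 (kern PU PXU (c i).1 (c i).2)) := by
            rw [hlogsum, ← Finset.sum_neg_distrib]
        _ = ∑ i, (if 0 < PXU (c i) then -(Real.logb 2 (PXU (c i) / PU (c i).2)) else 0) :=
            Finset.sum_congr rfl (fun i _ => (hf i).symm)
    rw [h4]
    exact aep_bound PXU
      (fun p => if 0 < PXU p then -(Real.logb 2 (PXU p / PU p.2)) else 0)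
      hPXU0 hsum1 HXgU hμ₁ δ₁ hδ₁ n hn
      (fun c => ¬ SDec (fun i => (c i).1) fun i => (c i).2) hE
  -- soft covering lemma machinery
  set τ₂ : ℝ := (n:ℝ) * (IYU + δ₂) with hτ₂def
  set K : ℝ := (2:ℝ)^τ₂ with hKdef
  have hK0 : 0 < K := Real.rpow_pos_of_pos two_pos _
  set T : (Fin n → Y) → (Fin n → U) → Prop := fun y u => Phi y u ≤ K * PYn y with hTdef
  set Φ1 : (Fin n → Y) → (Fin n → U) → ℝ :=
    fun y u => if T y u then Phi y u else 0 with hΦ1def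
  set Φ2 : (Fin n → Y) → (Fin n → U) → ℝ :=
    fun y u => if T y u then 0 else Phi y u with hΦ2def
  have hΦsplit : ∀ y u, Phi y u = Φ1 y u + Φ2 y u := by
    intro y u
    rw [hΦ1def, hΦ2def]
    dsimp only
    split_ifs <;> ring
  have hΦ1_0 : ∀ y u, 0 ≤ Φ1 y u := by
    intro y u; rw [hΦ1def]; dsimp only; split_ifs; exacts [hPhi0 y u, le_rfl]
  have hΦ2_0 : ∀ y u, 0 ≤ Φ2 y u := by
    intro y u; rw [hΦ2def]; dsimp only; split_ifs; exacts [le_rfl, hPhi0 y u]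
  have hΦ1_le : ∀ y u, Φ1 y u ≤ Phi y u := by
    intro y u; rw [hΦ1def]; dsimp only; split_ifs; exacts [le_rfl, hPhi0 y u]
  have hΦ1_leK : ∀ y u, Φ1 y u ≤ K * PYn y := by
    intro y u
    rw [hΦ1def]
    dsimp only
    split_ifs with h
    · rw [hTdef] at h; exact h
    · exact mul_nonneg hK0.le (hPYn0 y)
  set m : (Fin n → Y) → ℝ := fun y => ∑ u, PUn u * Φ1 y u with hmdef
  have hm_le : ∀ y, m y ≤ PYn y := by
    intro y
    rw [hmdef, ← hPhi_marg y]
    exact Finset.sum_le_sum (fun u _ => mul_le_mul_of_nonneg_left (hΦ1_le y u) (hPUn0 u))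
  set Q1 : (Fin M₂ → (Fin n → U)) → (Fin n → Y) → ℝ :=
    fun C y => (M₂:ℝ)⁻¹ * ∑ j, Φ1 y (C j) with hQ1def
  set Q2 : (Fin M₂ → (Fin n → U)) → (Fin n → Y) → ℝ :=
    fun C y => (M₂:ℝ)⁻¹ * ∑ j, Φ2 y (C j) with hQ2def
  have hQ2_0 : ∀ C y, 0 ≤ Q2 C y := by
    intro C y
    rw [hQ2def]
    exact mul_nonneg (by positivity) (Finset.sum_nonneg (fun j _ => hΦ2_0 _ _))
  have hQyspl : ∀ C y, Qy C y = Q1 C y + Q2 C y := by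
    intro C y
    rw [hQydef, hQ1def, hQ2def]
    dsimp only
    rw [← mul_add, ← Finset.sum_add_distrib]
    congr 1
    exact Finset.sum_congr rfl (fun j _ => hΦsplit y (C j))
  set PT : ℝ := ∑ y, ∑ u, PUn u * Φ2 y u with hPTdef
  have hQ2m : ∀ y, ∑ u, PUn u * Φ2 y u = PYn y - m y := by
    intro y
    have hpt : ∀ u : Fin n → U, PUn u * Φ2 y u = PUn u * Phi y u - PUn u * Φ1 y u := by
      intro u
      rw [hΦsplit y u]
      ring
    simp_rw [hpt]
    rw [Finset.sum_sub_distrib, hPhi_marg y, hmdef]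
  have hDpt : ∀ C y, |PYn y - Qy C y| ≤ |Q1 C y - m y| + Q2 C y + (PYn y - m y) := by
    intro C y
    have h1 : PYn y - Qy C y = (PYn y - m y) + (m y - Q1 C y) - Q2 C y := by
      rw [hQyspl C y]
      ring
    have h2 : |PYn y - Qy C y| ≤ |PYn y - m y| + |m y - Q1 C y| + |Q2 C y| := by
      rw [h1]
      calc |(PYn y - m y) + (m y - Q1 C y) - Q2 C y|
          ≤ |(PYn y - m y) + (m y - Q1 C y)| + |Q2 C y| := abs_sub _ _
        _ ≤ |PYn y - m y| + |m y - Q1 C y| + |Q2 C y| := by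
            have := abs_add_le (PYn y - m y) (m y - Q1 C y)
            linarith
    have h3 : |PYn y - m y| = PYn y - m y := abs_of_nonneg (by linarith [hm_le y])
    have h4 : |Q2 C y| = Q2 C y := abs_of_nonneg (hQ2_0 C y)
    have h5 : |m y - Q1 C y| = |Q1 C y - m y| := abs_sub_comm _ _
    linarith
  have hEQ2 : ∑ C, W2 C * (∑ y, Q2 C y) = PT := by
    rw [expect_swap W2 (fun y C => Q2 C y), hPTdef]
    refine Finset.sum_congr rfl (fun y _ => ?_)
    calc ∑ C, W2 C * Q2 C y
        = (M₂:ℝ)⁻¹ * ∑ C, W2 C * ∑ j, Φ2 y (C j) := by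
          rw [hQ2def]
          exact expect_const_mul W2 _ _
      _ = (M₂:ℝ)⁻¹ * ∑ j, ∑ C, W2 C * Φ2 y (C j) := by
          rw [expect_swap W2 (fun j C => Φ2 y (C j))]
      _ = (M₂:ℝ)⁻¹ * ∑ j : Fin M₂, ∑ u, PUn u * Φ2 y u := by
          congr 1
          refine Finset.sum_congr rfl (fun j _ => ?_)
          simp only [hW2def]
          exact sum_pmeas_single PUn hPUn_sum j (Φ2 y)
      _ = ∑ u, PUn u * Φ2 y u := by
          rw [Finset.sum_const, Finset.card_univ, Fintype.card_fin, nsmul_eq_mul,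
            ← mul_assoc, inv_mul_cancel₀ hM₂R.ne', one_mul]
  have hEPm : ∑ C, W2 C * (∑ y, (PYn y - m y)) = PT := by
    rw [← Finset.sum_mul, hW2sum, one_mul, hPTdef]
    exact Finset.sum_congr rfl (fun y _ => (hQ2m y).symm)
  -- PT bound via the AEP for the information density
  have hPT : PT ≤ (∑ p : Y × U, PYU p *
      ((if 0 < PYU p then Real.logb 2 (PYU p / (PY p.1 * PU p.2)) else 0) - IYU)^2)
      / (n * δ₂^2) := by
    have hform : PT = ∑ c : Fin n → Y × U,
        (if ¬ T (fun i => (c i).1) (fun i => (c i).2) then ∏ k, PYU (c k) else 0) := by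
      rw [hPTdef, sum_zip (A := Y) (B := U) n (fun c =>
        (if ¬ T (fun i => (c i).1) (fun i => (c i).2) then ∏ k, PYU (c k) else 0))]
      refine Finset.sum_congr rfl (fun y _ => Finset.sum_congr rfl (fun u _ => ?_))
      show PUn u * Φ2 y u = (if ¬ T y u then ∏ k, PYU (y k, u k) else 0)
      rw [hΦ2def]
      dsimp only
      by_cases h : T y u
      · rw [if_pos h, mul_zero, if_neg (by simpa using h)]
      · rw [if_neg h, if_pos h, hPYUn_eq y u]
    have hsum2 : ∑ p : Y × U, PYU p = 1 := by
      rw [Fintype.sum_prod_type]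
      calc ∑ a : Y, ∑ b : U, PYU (a, b) = ∑ a : Y, PY a :=
            Finset.sum_congr rfl (fun a _ => hPYUmargY a)
        _ = 1 := hPYsum
    have hE₂ : ∀ c : Fin n → Y × U,
        (¬ T (fun i => (c i).1) fun i => (c i).2) → (∀ i, 0 < PYU (c i)) →
        (n:ℝ) * (IYU + δ₂)
          < ∑ i, (if 0 < PYU (c i)
              then Real.logb 2 (PYU (c i) / (PY (c i).1 * PU (c i).2)) else 0) := by
      intro c hEc hsupp
      have hPYi : ∀ i, 0 < PY (c i).1 := by
        intro i
        have := hPYUlePY (c i).1 (c i).2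
        have hp : 0 < PYU ((c i).1, (c i).2) := by simpa using hsupp i
        linarith
      have hker : ∀ i : Fin n,
          kern PU PYU (c i).1 (c i).2 = PYU (c i) / PU (c i).2
            ∧ 0 < kern PU PYU (c i).1 (c i).2 := by
        intro i
        have hp : 0 < PYU ((c i).1, (c i).2) := by simpa using hsupp i
        have := kern_pos PU PYU hPYU0 (fun a b => hPYUlePU a b) hp
        simpa using this
      have hprodpos : 0 < ∏ i, kern PU PYU (c i).1 (c i).2 :=
        Finset.prod_pos (fun i _ => (hker i).2)
      have hPYnpos : 0 < ∏ i, PY (c i).1 := Finset.prod_pos (fun i _ => hPYi i)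
      have hgt : K * (∏ i, PY (c i).1) < ∏ i, kern PU PYU (c i).1 (c i).2 := by
        rw [hTdef] at hEc
        exact not_le.mp hEc
      have hlog : Real.logb 2 (K * ∏ i, PY (c i).1)
          < Real.logb 2 (∏ i, kern PU PYU (c i).1 (c i).2) :=
        Real.logb_lt_logb one_lt_two (by positivity) hgt
      have hlogK : Real.logb 2 (K * ∏ i, PY (c i).1)
          = τ₂ + ∑ i, Real.logb 2 (PY (c i).1) := by
        rw [Real.logb_mul hK0.ne' hPYnpos.ne', hKdef, Real.logb_rpow two_pos (by norm_num), Real.logb_prod Finset.univ _ (fun i _ => (hPYi i).ne')]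
      have hlogk : Real.logb 2 (∏ i, kern PU PYU (c i).1 (c i).2)
          = ∑ i, Real.logb 2 (kern PU PYU (c i).1 (c i).2) :=
        Real.logb_prod Finset.univ _ (fun i _ => (hker i).2.ne')
      have hf : ∀ i : Fin n,
          (if 0 < PYU (c i)
            then Real.logb 2 (PYU (c i) / (PY (c i).1 * PU (c i).2)) else 0)
          = Real.logb 2 (kern PU PYU (c i).1 (c i).2) - Real.logb 2 (PY (c i).1) := by
        intro i
        rw [if_pos (hsupp i), (hker i).1, ← Real.logb_div ?hne (hPYi i).ne']
        · congr 1
          rw [div_div]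
          ring_nf
        · have := (hker i).2
          rw [(hker i).1] at this
          exact this.ne'
      calc (n:ℝ) * (IYU + δ₂) = τ₂ := by rw [hτ₂def]
        _ < Real.logb 2 (∏ i, kern PU PYU (c i).1 (c i).2)
            - ∑ i, Real.logb 2 (PY (c i).1) := by linarith
        _ = ∑ i, (Real.logb 2 (kern PU PYU (c i).1 (c i).2)
            - Real.logb 2 (PY (c i).1)) := by
            rw [hlogk, Finset.sum_sub_distrib]
        _ = ∑ i, (if 0 < PYU (c i)
              then Real.logb 2 (PYU (c i) / (PY (c i).1 * PU (c i).2)) else 0) :=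
            Finset.sum_congr rfl (fun i _ => (hf i).symm)
    rw [hform]
    exact aep_bound PYU
      (fun p => if 0 < PYU p then Real.logb 2 (PYU p / (PY p.1 * PU p.2)) else 0)
      hPYU0 hsum2 IYU hμ₂ δ₂ hδ₂ n hn
      (fun c => ¬ T (fun i => (c i).1) fun i => (c i).2) hE₂
  -- numeric bound for the variance term
  have hnum2 : Real.sqrt (K / (M₂:ℝ)) ≤ (2:ℝ)^(-((n:ℝ)*δ₂)/2) := by
    have h1 : K / (M₂:ℝ) ≤ (2:ℝ)^(-((n:ℝ)*δ₂)) := by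
      calc K / (M₂:ℝ) ≤ K / (2:ℝ)^((n:ℝ)*R₂) :=
            div_le_div_of_nonneg_left hK0.le (Real.rpow_pos_of_pos two_pos _) hM₂ge
        _ = (2:ℝ)^(τ₂ - (n:ℝ)*R₂) := by
            rw [hKdef]
            exact (Real.rpow_sub two_pos _ _).symm
        _ ≤ (2:ℝ)^(-((n:ℝ)*δ₂)) := by
            apply (Real.rpow_le_rpow_left_iff one_lt_two).mpr
            rw [hτ₂def]
            have hn0 : (0:ℝ) ≤ (n:ℝ) := Nat.cast_nonneg n
            nlinarith
    calc Real.sqrt (K / (M₂:ℝ)) ≤ Real.sqrt ((2:ℝ)^(-((n:ℝ)*δ₂))) := Real.sqrt_le_sqrt h1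
      _ = (2:ℝ)^(-((n:ℝ)*δ₂)/2) := by
        rw [show (2:ℝ)^(-((n:ℝ)*δ₂)) = ((2:ℝ)^(-((n:ℝ)*δ₂)/2))^2 by
          rw [← Real.rpow_natCast ((2:ℝ)^(-((n:ℝ)*δ₂)/2)) 2,
            ← Real.rpow_mul (by norm_num : (0:ℝ) ≤ 2)]
          norm_num]
        exact Real.sqrt_sq (Real.rpow_nonneg (by norm_num) _)
  -- the variance (Cauchy-Schwarz) term
  have hvar : ∑ C, W2 C * (∑ y, |Q1 C y - m y|) ≤ (2:ℝ)^(-((n:ℝ)*δ₂)/2) := by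
    rw [expect_swap W2 (fun y C => |Q1 C y - m y|)]
    have hper : ∀ y, ∑ C, W2 C * |Q1 C y - m y| ≤ PYn y * Real.sqrt (K / (M₂:ℝ)) := by
      intro y
      have hm' : ∑ u, PUn u * Φ1 y u = m y := rfl
      have hV : ∑ u, PUn u * (Φ1 y u - m y)^2 ≤ K * PYn y * PYn y := by
        have hexp : ∑ u, PUn u * (Φ1 y u - m y)^2
            = (∑ u, PUn u * (Φ1 y u)^2) - (m y)^2 := by
          have h1 : ∀ u : Fin n → U, PUn u * (Φ1 y u - m y)^2
              = PUn u * (Φ1 y u)^2 - 2 * m y * (PUn u * Φ1 y u)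
                + (m y)^2 * PUn u := fun u => by ring
          simp_rw [h1]
          rw [Finset.sum_add_distrib, Finset.sum_sub_distrib, ← Finset.mul_sum,
            ← Finset.mul_sum, hPUn_sum, hm']
          ring
        have hS2 : ∑ u, PUn u * (Φ1 y u)^2 ≤ K * PYn y * PYn y := by
          calc ∑ u, PUn u * (Φ1 y u)^2
              ≤ ∑ u, PUn u * (K * PYn y * Phi y u) := by
                refine Finset.sum_le_sum (fun u _ => ?_)
                refine mul_le_mul_of_nonneg_left ?_ (hPUn0 u)
                calc (Φ1 y u)^2 = Φ1 y u * Φ1 y u := sq (Φ1 y u) ▸ rfl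
                  _ ≤ (K * PYn y) * Phi y u :=
                    mul_le_mul (hΦ1_leK y u) (hΦ1_le y u) (hΦ1_0 y u)
                      (mul_nonneg hK0.le (hPYn0 y))
              _ = K * PYn y * ∑ u, PUn u * Phi y u := by
                rw [Finset.mul_sum]
                exact Finset.sum_congr rfl (fun u _ => by ring)
              _ = K * PYn y * PYn y := by rw [hPhi_marg]
        nlinarith [sq_nonneg (m y)]
      have hj : ∑ C, W2 C * (Q1 C y - m y)^2 ≤ K * PYn y * PYn y / M₂ := by
        have hrw : ∀ C : Fin M₂ → (Fin n → U),
            Q1 C y - m y = (M₂:ℝ)⁻¹ * (∑ j, (Φ1 y (C j) - m y)) := by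
          intro C
          rw [hQ1def]
          dsimp only
          rw [Finset.sum_sub_distrib, Finset.sum_const, Finset.card_univ,
            Fintype.card_fin, nsmul_eq_mul, mul_sub, ← mul_assoc,
            inv_mul_cancel₀ hM₂R.ne', one_mul]
        simp_rw [hrw, mul_pow]
        rw [expect_const_mul W2 (((M₂:ℝ)⁻¹)^2)
          (fun C => (∑ j, (Φ1 y (C j) - m y))^2)]
        have hsq := pmeas_sq_sum PUn hPUn_sum (fun u => Φ1 y u) (m y) hm' M₂
        simp only [hW2def]
        rw [hsq]
        calc ((M₂:ℝ)⁻¹)^2 * ((M₂:ℝ) * ∑ u, PUn u * (Φ1 y u - m y)^2)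
            ≤ ((M₂:ℝ)⁻¹)^2 * ((M₂:ℝ) * (K * PYn y * PYn y)) := by
              refine mul_le_mul_of_nonneg_left ?_ (by positivity)
              exact mul_le_mul_of_nonneg_left hV (by positivity)
          _ = K * PYn y * PYn y / M₂ := by
              field_simp
      calc ∑ C, W2 C * |Q1 C y - m y|
          ≤ Real.sqrt (∑ C, W2 C * (Q1 C y - m y)^2) :=
            expect_abs_le_sqrt W2 (fun C => Q1 C y - m y) hW20 hW2sum
        _ ≤ Real.sqrt (K * PYn y * PYn y / M₂) := Real.sqrt_le_sqrt hj
        _ = PYn y * Real.sqrt (K / (M₂:ℝ)) := by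
            rw [show K * PYn y * PYn y / M₂ = (PYn y)^2 * (K / M₂) by ring]
            rw [Real.sqrt_mul (sq_nonneg _), Real.sqrt_sq (hPYn0 y)]
    calc ∑ y, ∑ C, W2 C * |Q1 C y - m y|
        ≤ ∑ y, PYn y * Real.sqrt (K / (M₂:ℝ)) := Finset.sum_le_sum (fun y _ => hper y)
      _ = Real.sqrt (K / (M₂:ℝ)) := by rw [← Finset.sum_mul, hPYn_sum, one_mul]
      _ ≤ (2:ℝ)^(-((n:ℝ)*δ₂)/2) := hnum2
  -- the deviation bound
  have hDbound : ∑ C, W2 C * D C ≤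
      2 * ((∑ p : Y × U, PYU p *
        ((if 0 < PYU p then Real.logb 2 (PYU p / (PY p.1 * PU p.2)) else 0) - IYU)^2)
        / (n * δ₂^2)) + (2:ℝ)^(-((n:ℝ)*δ₂)/2) := by
    have hstep : ∑ C, W2 C * D C ≤
        (∑ C, W2 C * (∑ y, |Q1 C y - m y|)) + (∑ C, W2 C * (∑ y, Q2 C y))
          + ∑ C, W2 C * (∑ y, (PYn y - m y)) := by
      rw [← Finset.sum_add_distrib, ← Finset.sum_add_distrib]
      refine Finset.sum_le_sum (fun C _ => ?_)
      rw [← mul_add, ← mul_add]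
      refine mul_le_mul_of_nonneg_left ?_ (hW20 C)
      rw [hDdef]
      dsimp only
      rw [← Finset.sum_add_distrib, ← Finset.sum_add_distrib]
      exact Finset.sum_le_sum (fun y _ => hDpt C y)
    calc ∑ C, W2 C * D C
        ≤ (∑ C, W2 C * (∑ y, |Q1 C y - m y|)) + (∑ C, W2 C * (∑ y, Q2 C y))
          + ∑ C, W2 C * (∑ y, (PYn y - m y)) := hstep
      _ ≤ (2:ℝ)^(-((n:ℝ)*δ₂)/2) + PT + PT := by
          rw [hEQ2, hEPm]
          exact add_le_add (add_le_add hvar le_rfl) le_rfl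
      _ ≤ 2 * ((∑ p : Y × U, PYU p *
          ((if 0 < PYU p then Real.logb 2 (PYU p / (PY p.1 * PU p.2)) else 0) - IYU)^2)
          / (n * δ₂^2)) + (2:ℝ)^(-((n:ℝ)*δ₂)/2) := by linarith [hPT]
  -- final assembly
  calc ∑ C, W2 C * ∑ b, Wb b * Err C b
      ≤ ∑ C, W2 C * (ErrA C + (2:ℝ)^(-((n:ℝ)*δ₁))) := by
        refine Finset.sum_le_sum (fun C _ => mul_le_mul_of_nonneg_left ?_ (hW20 C))
        calc ∑ b, Wb b * Err C b
            ≤ ∑ b, Wb b * (ErrA C + ErrB C b) :=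
              Finset.sum_le_sum (fun b _ =>
                mul_le_mul_of_nonneg_left (hErrsplit C b) (hWb0 b))
          _ = ErrA C + ∑ b, Wb b * ErrB C b := by
              simp_rw [mul_add]
              rw [Finset.sum_add_distrib, ← Finset.sum_mul, hWbsum, one_mul]
          _ ≤ ErrA C + (2:ℝ)^(-((n:ℝ)*δ₁)) := by
              linarith [hErrB C]
    _ = (∑ C, W2 C * ErrA C) + (2:ℝ)^(-((n:ℝ)*δ₁)) := by
        simp_rw [mul_add]
        rw [Finset.sum_add_distrib, ← Finset.sum_mul, hW2sum, one_mul]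
    _ ≤ (∑ C, W2 C * (IA C + D C)) + (2:ℝ)^(-((n:ℝ)*δ₁)) := by
        refine add_le_add_left (Finset.sum_le_sum (fun C _ =>
          mul_le_mul_of_nonneg_left (hErrA C) (hW20 C))) _
    _ = (∑ C, W2 C * IA C) + (∑ C, W2 C * D C) + (2:ℝ)^(-((n:ℝ)*δ₁)) := by
        simp_rw [mul_add]
        rw [Finset.sum_add_distrib]
    _ ≤ (∑ p : X × U, PXU p *
          ((if 0 < PXU p then -(Real.logb 2 (PXU p / PU p.2)) else 0) - HXgU)^2)
          / (n * δ₁^2)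
        + (2 * ((∑ p : Y × U, PYU p *
          ((if 0 < PYU p then Real.logb 2 (PYU p / (PY p.1 * PU p.2)) else 0) - IYU)^2)
          / (n * δ₂^2)) + (2:ℝ)^(-((n:ℝ)*δ₂)/2)) + (2:ℝ)^(-((n:ℝ)*δ₁)) := by
        exact add_le_add (add_le_add hIAbound hDbound) le_rfl
    _ = (∑ p : X × U, PXU p *
          ((if 0 < PXU p then -(Real.logb 2 (PXU p / PU p.2)) else 0) - HXgU)^2)
          / (n * δ₁^2)
        + 2 * ((∑ p : Y × U, PYU p *
          ((if 0 < PYU p then Real.logb 2 (PYU p / (PY p.1 * PU p.2)) else 0) - IYU)^2)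
          / (n * δ₂^2))
        + (2:ℝ)^(-((n:ℝ) * δ₂)/2) + (2:ℝ)^(-((n:ℝ) * δ₁)) := by ring

/-- Wyner's rate region is asymptotically achievable.  For the Markov
chain `X → Y → U` induced by a conditional pmf `P_{U|Y}`, any rate pair `(R₁, R₂)` with
`R₁ > H(X|U)` and `R₂ > I(Y;U)` is asymptotically achievable for source coding of `X`
with coded side information `Y` at the decoder. -/
theorem wyner_region_asymptotically_achievable
    {X Y U : Type*} [Fintype X] [Fintype Y] [Fintype U]
    (PXY : X × Y → ℝ)
    (hP0 : ∀ p, 0 ≤ PXY p) (hP1 : ∑ p, PXY p = 1)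
    (PUgY : Y → U → ℝ)
    (hU0 : ∀ y u, 0 ≤ PUgY y u) (hU1 : ∀ y, ∑ u, PUgY y u = 1)
    (PY : Y → ℝ) (hPY : ∀ y, PY y = ∑ x, PXY (x, y))
    (PU : U → ℝ) (hPU : ∀ u, PU u = ∑ y, PY y * PUgY y u)
    (PXU : X × U → ℝ) (hPXU : ∀ x u, PXU (x, u) = ∑ y, PXY (x, y) * PUgY y u)
    (PYU : Y × U → ℝ) (hPYU : ∀ y u, PYU (y, u) = PY y * PUgY y u)
    (HXgU : ℝ) (hH : HXgU = -∑ p : X × U, PXU p * Real.logb 2 (PXU p / PU p.2))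
    (IYU : ℝ) (hI : IYU = ∑ p : Y × U, PYU p * Real.logb 2 (PYU p / (PY p.1 * PU p.2)))
    (R₁ R₂ : ℝ) (hR₁ : HXgU < R₁) (hR₂ : IYU < R₂)
    (ε : ℝ) (hε : 0 < ε) :
    ∃ N : ℕ, ∀ n ≥ N,
      ∃ (e₁ : (Fin n → X) → Fin ⌈(2 : ℝ) ^ (n * R₁)⌉₊)
        (e₂ : (Fin n → Y) → Fin ⌈(2 : ℝ) ^ (n * R₂)⌉₊)
        (d : Fin ⌈(2 : ℝ) ^ (n * R₁)⌉₊ × Fin ⌈(2 : ℝ) ^ (n * R₂)⌉₊ → (Fin n → X)),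
        ∑ x : Fin n → X, ∑ y : Fin n → Y,
          (if d (e₁ x, e₂ y) ≠ x then ∏ i, PXY (x i, y i) else 0) ≤ ε := by
  classical
  set δ₁ : ℝ := (R₁ - HXgU)/2 with hδ₁def
  set δ₂ : ℝ := (R₂ - IYU)/2 with hδ₂def
  have hδ₁ : 0 < δ₁ := by rw [hδ₁def]; linarith
  have hδ₂ : 0 < δ₂ := by rw [hδ₂def]; linarith
  have hRa : HXgU + δ₁ + δ₁ ≤ R₁ := by rw [hδ₁def]; linarith
  have hRb : IYU + δ₂ + δ₂ ≤ R₂ := by rw [hδ₂def]; linarith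
  set V₁ : ℝ := ∑ p : X × U, PXU p *
      ((if 0 < PXU p then -(Real.logb 2 (PXU p / PU p.2)) else 0) - HXgU)^2 with hV₁def
  set V₂ : ℝ := ∑ p : Y × U, PYU p *
      ((if 0 < PYU p then Real.logb 2 (PYU p / (PY p.1 * PU p.2)) else 0) - IYU)^2 with hV₂def
  set B : ℕ → ℝ := fun n => V₁ / (n * δ₁^2) + 2 * (V₂ / (n * δ₂^2))
      + (2:ℝ)^(-((n:ℝ) * δ₂)/2) + (2:ℝ)^(-((n:ℝ) * δ₁)) with hBdef
  have htend : Filter.Tendsto B Filter.atTop (nhds 0) := by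
    have t1 : Filter.Tendsto (fun n : ℕ => V₁ / (n * δ₁^2)) Filter.atTop (nhds 0) := by
      have he : (fun n : ℕ => V₁ / (n * δ₁^2)) = fun n : ℕ => (V₁ / δ₁^2) / n := by
        funext n
        rw [div_div]
        ring_nf
      rw [he]
      exact tendsto_const_div_atTop_nhds_zero_nat _
    have t2 : Filter.Tendsto (fun n : ℕ => 2 * (V₂ / (n * δ₂^2))) Filter.atTop (nhds 0) := by
      have he : (fun n : ℕ => 2 * (V₂ / (n * δ₂^2))) = fun n : ℕ => (2 * V₂ / δ₂^2) / n := by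
        funext n
        rw [div_div, mul_div_assoc, mul_comm (n : ℝ) (δ₂^2)]
      rw [he]
      exact tendsto_const_div_atTop_nhds_zero_nat _
    have t3 : Filter.Tendsto (fun n : ℕ => (2:ℝ)^(-((n:ℝ) * δ₂)/2)) Filter.atTop (nhds 0) := by
      have he : (fun n : ℕ => (2:ℝ)^(-((n:ℝ) * δ₂)/2)) = fun n : ℕ => ((2:ℝ)^(-δ₂/2))^n := by
        funext n
        rw [← Real.rpow_natCast ((2:ℝ)^(-δ₂/2)) n, ← Real.rpow_mul (by norm_num)]
        congr 1
        ring
      rw [he]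
      exact tendsto_pow_atTop_nhds_zero_of_lt_one
        (Real.rpow_nonneg (by norm_num) _)
        (Real.rpow_lt_one_of_one_lt_of_neg one_lt_two (by linarith))
    have t4 : Filter.Tendsto (fun n : ℕ => (2:ℝ)^(-((n:ℝ) * δ₁))) Filter.atTop (nhds 0) := by
      have he : (fun n : ℕ => (2:ℝ)^(-((n:ℝ) * δ₁))) = fun n : ℕ => ((2:ℝ)^(-δ₁))^n := by
        funext n
        rw [← Real.rpow_natCast ((2:ℝ)^(-δ₁)) n, ← Real.rpow_mul (by norm_num)]
        congr 1
        ring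
      rw [he]
      exact tendsto_pow_atTop_nhds_zero_of_lt_one
        (Real.rpow_nonneg (by norm_num) _)
        (Real.rpow_lt_one_of_one_lt_of_neg one_lt_two (by linarith))
    have := ((t1.add t2).add t3).add t4
    simpa using this
  have hev : ∀ᶠ n in Filter.atTop, B n < ε := htend.eventually_lt_const hε
  obtain ⟨N₀, hN₀⟩ := Filter.eventually_atTop.mp hev
  refine ⟨max N₀ 1, fun n hn => ?_⟩
  have hn1 : 0 < n := lt_of_lt_of_le (by norm_num) (le_trans (le_max_right N₀ 1) hn)
  obtain ⟨e₁, e₂, d, hbound⟩ := wyner_main_n PXY hP0 hP1 PUgY hU0 hU1 PY hPY PU hPU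
    PXU hPXU PYU hPYU HXgU hH IYU hI R₁ R₂ δ₁ δ₂ hδ₁ hδ₂ hRa hRb n hn1
  refine ⟨e₁, e₂, d, hbound.trans ?_⟩
  exact (hN₀ n (le_trans (le_max_left N₀ 1) hn)).le
end
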